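/- arXiv:1907.07839 — 4 statements merged into one kernel-verified Lean document; each statement's English description precedes it below -/
import Mathlib

section
/- For any real number Q > 1, the unit ball 𝕋 = {α ∈ K_∞ : |α| < 1} is the disjoint union, over monic polynomials r ∈ F_q[t] with |r| ≤ q^Q and polynomials a with |a| < |r| and gcd(a,r) = 1, of the sets {α ∈ 𝕋 : |rα − a| < q^{-Q}}. -/
/-!
Common setup: `K_∞ = 𝔽_q((1/t))` is modeled as `LaurentSeries Fq` in the variable `X = 1/t`,
so that an element `Σ_{i ≤ N} a_i t^i` of `K_∞` corresponds to the Hahn series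
`Σ_{n ≥ -N} a_{-n} X^n`.  The degree in `t` is the negative of the Hahn-series order,
the absolute value is `|α| = q^{deg_t α}`, and the standard additive character is
`ψ(α) = e_q(coefficient of t^{-1}) = e_q(coefficient of X^1)`.
-/

open scoped BigOperators Classical
noncomputable section



namespace FF

variable {Fq : Type*} [Field Fq] [Fintype Fq]

/-- The element `t = X⁻¹` of `K_∞`. -/
def tK : LaurentSeries Fq := HahnSeries.single (-1 : ℤ) 1

/-- Degree in `t` of a Laurent series (degree of `0` is `0` by convention). -/
def tdeg (α : LaurentSeries Fq) : ℤ := -α.order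

/-- The absolute value `|α| = q^{deg_t α}` on `K_∞`, with `|0| = 0`. -/
def absv (α : LaurentSeries Fq) : ℝ :=
  if α = 0 then 0 else (Fintype.card Fq : ℝ) ^ (-α.order)

/-- The embedding `𝔽_q[t] → K_∞`. -/
def toK (p : Polynomial Fq) : LaurentSeries Fq := Polynomial.eval₂ HahnSeries.C tK p

/-- The standard additive character `ψ` of `K_∞` attached to a character `e` of `𝔽_q`. -/
def psi (e : AddChar Fq ℂ) (α : LaurentSeries Fq) : ℂ := e (α.coeff 1)

/-- The polynomial `Σ_{i<N} c_i t^i` attached to a coefficient tuple. -/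
def polyOf {N : ℕ} (c : Fin N → Fq) : Polynomial Fq :=
  ∑ i : Fin N, Polynomial.C (c i) * Polynomial.X ^ (i : ℕ)

/-- Absolute value of a polynomial: `|p| = q^{deg p}`, `|0| = 0`. -/
def absP (p : Polynomial Fq) : ℝ :=
  if p = 0 then 0 else (Fintype.card Fq : ℝ) ^ p.natDegree

/-- The part `((γ))` of `γ` supported in strictly negative `t`-degrees. -/
def fracPart (γ : LaurentSeries Fq) : LaurentSeries Fq where
  coeff n := if 1 ≤ n then γ.coeff n else 0
  isPWO_support' := γ.isPWO_support'.mono (fun n hn => by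
    by_cases h : (1 : ℤ) ≤ n <;> simp_all [Function.support])

/-- A canonical choice of inverse of `x` modulo `c` (junk value `0` if not coprime). -/
def modInv (x c : Polynomial Fq) : Polynomial Fq :=
  if h : IsCoprime x c then h.choose else 0

/-- Riemann sums approximating the Haar integral (normalized by `μ(𝕋) = 1`) of `w`
over the ball `{|α| < q^Y}`, at resolution `M`: the ball is partitioned into `q^M`
sub-balls of measure `q^{Y-M}` with representatives `Σ_{0 ≤ j < M} c_j t^{Y-1-j}`. -/
def ballSum (Y : ℤ) (M : ℕ) (w : LaurentSeries Fq → ℂ) : ℂ :=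
  ((Fintype.card Fq : ℂ) ^ Y * ((Fintype.card Fq : ℂ) ^ M)⁻¹) *
    ∑ c : Fin M → Fq, w (∑ j : Fin M, HahnSeries.single ((1 : ℤ) - Y + (j : ℕ)) (c j))

/-- Riemann sums approximating the Haar integral of `w` over `𝕋^d` at resolution `M`. -/
def cubeSum (d M : ℕ) (w : (Fin d → LaurentSeries Fq) → ℂ) : ℂ :=
  (((Fintype.card Fq : ℂ) ^ (d * M))⁻¹) *
    ∑ c : Fin d → Fin M → Fq,
      w (fun i => ∑ j : Fin M, HahnSeries.single (((j : ℕ) : ℤ) + 1) (c i j))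

namespace Farey

variable (Fq) in
lemma hq1 : (1:ℝ) < (Fintype.card Fq : ℝ) := by exact_mod_cast Fintype.one_lt_card

variable (Fq) in
lemma hq0 : (0:ℝ) < (Fintype.card Fq : ℝ) := lt_trans one_pos (hq1 Fq)

lemma absv_zero : absv (0 : LaurentSeries Fq) = 0 := if_pos rfl

lemma absv_of_ne {x : LaurentSeries Fq} (hx : x ≠ 0) :
    absv x = (Fintype.card Fq : ℝ) ^ ((-x.order : ℤ) : ℝ) := by
  rw [absv, if_neg hx, Real.rpow_intCast]

lemma absv_nonneg (x : LaurentSeries Fq) : 0 ≤ absv x := by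
  rcases eq_or_ne x 0 with h | h
  · simp [h, absv_zero]
  · rw [absv_of_ne h]; positivity

lemma absv_pos {x : LaurentSeries Fq} (hx : x ≠ 0) : 0 < absv x := by
  rw [absv_of_ne hx]; positivity

lemma absv_mul (x y : LaurentSeries Fq) : absv (x * y) = absv x * absv y := by
  rcases eq_or_ne x 0 with h | hx; · simp [h, absv_zero]
  rcases eq_or_ne y 0 with h | hy; · simp [h, absv_zero]
  have hxy : x * y ≠ 0 := mul_ne_zero hx hy
  rw [absv_of_ne hxy, absv_of_ne hx, absv_of_ne hy,
    HahnSeries.order_mul hx hy, ← Real.rpow_add (hq0 Fq)]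
  push_cast
  ring_nf

lemma absv_add_le (x y : LaurentSeries Fq) :
    absv (x + y) ≤ max (absv x) (absv y) := by
  rcases eq_or_ne x 0 with h | hx
  · simp [h, absv_zero, le_max_iff, le_refl, absv_nonneg]
  rcases eq_or_ne y 0 with h | hy
  · simp [h, absv_zero, le_max_iff, le_refl, absv_nonneg]
  rcases eq_or_ne (x + y) 0 with h | hxy
  · simp [h, absv_zero, le_max_iff, absv_nonneg]
  have horder := HahnSeries.min_order_le_order_add hxy (x := x) (y := y)
  rw [absv_of_ne hxy, absv_of_ne hx, absv_of_ne hy]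
  rcases le_total x.order y.order with hc | hc
  · have h1 : x.order ≤ (x+y).order := le_trans (le_of_eq (min_eq_left hc).symm) horder
    refine le_max_of_le_left ?_
    rw [Real.rpow_le_rpow_left_iff (hq1 Fq)]
    exact_mod_cast neg_le_neg h1
  · have h1 : y.order ≤ (x+y).order := le_trans (le_of_eq (min_eq_right hc).symm) horder
    refine le_max_of_le_right ?_
    rw [Real.rpow_le_rpow_left_iff (hq1 Fq)]
    exact_mod_cast neg_le_neg h1

lemma absv_sub_le (x y : LaurentSeries Fq) :
    absv (x - y) ≤ max (absv x) (absv y) := by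
  have h := absv_add_le x (-y)
  have hneg : absv (-y) = absv y := by
    rcases eq_or_ne y 0 with hy | hy
    · simp [hy, absv_zero]
    · rw [absv_of_ne (neg_ne_zero.2 hy), absv_of_ne hy, HahnSeries.order_neg]
  rw [hneg] at h
  simpa [sub_eq_add_neg] using h

lemma toK_add (p q : Polynomial Fq) : toK (p + q) = toK p + toK q :=
  Polynomial.eval₂_add _ _

lemma toK_mul (p q : Polynomial Fq) : toK (p * q) = toK p * toK q :=
  Polynomial.eval₂_mul _ _

lemma toK_sub (p q : Polynomial Fq) : toK (p - q) = toK p - toK q :=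
  Polynomial.eval₂_sub _

lemma toK_zero : toK (0 : Polynomial Fq) = 0 := Polynomial.eval₂_zero _ _

lemma coeff_toK (p : Polynomial Fq) (n : ℤ) :
    (toK p).coeff n = if n ≤ 0 then p.coeff (-n).toNat else 0 := by
  induction p using Polynomial.induction_on' with
  | add p q hp hq =>
    rw [toK_add, HahnSeries.coeff_add, hp, hq]
    by_cases h : n ≤ 0 <;> simp [h]
  | monomial i a =>
    rw [toK, Polynomial.eval₂_monomial, tK, HahnSeries.single_pow,
      show (HahnSeries.C a : LaurentSeries Fq) = HahnSeries.single 0 a from rfl,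
      HahnSeries.single_mul_single]
    rw [HahnSeries.coeff_single, Polynomial.coeff_monomial]
    have hi : (0 : ℤ) + i • (-1 : ℤ) = -(i:ℤ) := by simp
    rw [hi, one_pow, mul_one]
    by_cases hn : n ≤ 0
    · by_cases he : n = -(i:ℤ)
      · have h2 : i = (-n).toNat := by omega
        rw [if_pos he, if_pos hn, if_pos h2]
      · have h2 : ¬ i = (-n).toNat := by omega
        rw [if_neg he, if_pos hn, if_neg h2]
    · have he : ¬ n = -(i:ℤ) := by omega
      rw [if_neg he, if_neg hn]

lemma order_toK {p : Polynomial Fq} (hp : p ≠ 0) :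
    (toK p).order = -(p.natDegree : ℤ) := by
  have hcoeff : (toK p).coeff (-(p.natDegree : ℤ)) ≠ 0 := by
    rw [coeff_toK, if_pos (by omega)]
    have h : (-(-(p.natDegree:ℤ))).toNat = p.natDegree := by omega
    rw [h]
    exact mt Polynomial.leadingCoeff_eq_zero.mp hp
  refine le_antisymm (HahnSeries.order_le_of_coeff_ne_zero hcoeff) ?_
  by_contra h
  push_neg at h
  have hne : toK p ≠ 0 := HahnSeries.ne_zero_of_coeff_ne_zero hcoeff
  have h0 := HahnSeries.coeff_order_eq_zero.not.mpr hne
  rw [coeff_toK, if_pos (by omega)] at h0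
  exact h0 (Polynomial.coeff_eq_zero_of_natDegree_lt (by omega))

lemma toK_ne_zero {p : Polynomial Fq} (hp : p ≠ 0) : toK p ≠ 0 := by
  have hcoeff : (toK p).coeff (-(p.natDegree : ℤ)) ≠ 0 := by
    rw [coeff_toK, if_pos (by omega)]
    have h : (-(-(p.natDegree:ℤ))).toNat = p.natDegree := by omega
    rw [h]
    exact mt Polynomial.leadingCoeff_eq_zero.mp hp
  exact HahnSeries.ne_zero_of_coeff_ne_zero hcoeff

lemma absv_toK {p : Polynomial Fq} (hp : p ≠ 0) :
    absv (toK p) = (Fintype.card Fq : ℝ) ^ ((p.natDegree : ℕ) : ℝ) := by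
  rw [absv_of_ne (toK_ne_zero hp), order_toK hp]
  norm_num

lemma one_le_absv_toK {p : Polynomial Fq} (hp : p ≠ 0) : 1 ≤ absv (toK p) := by
  rw [absv_toK hp, show (1:ℝ) = (Fintype.card Fq : ℝ) ^ (0:ℝ) from (Real.rpow_zero _).symm]
  rw [Real.rpow_le_rpow_left_iff (hq1 Fq)]
  positivity

lemma coeff_polyOf {M : ℕ} (c : Fin M → Fq) (k : ℕ) :
    (polyOf c).coeff k = if h : k < M then c ⟨k, h⟩ else 0 := by
  rw [polyOf, Polynomial.finset_sum_coeff]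
  split_ifs with h
  · rw [Finset.sum_eq_single (⟨k, h⟩ : Fin M)]
    · simp
    · intro b _ hb
      rw [Polynomial.coeff_C_mul, Polynomial.coeff_X_pow, if_neg, mul_zero]
      intro hkb
      exact hb (Fin.ext hkb.symm)
    · intro hmem; exact absurd (Finset.mem_univ _) hmem
  · apply Finset.sum_eq_zero
    intro b _
    rw [Polynomial.coeff_C_mul, Polynomial.coeff_X_pow, if_neg, mul_zero]
    omega

lemma natDegree_polyOf_le {M : ℕ} (c : Fin (M+1) → Fq) : (polyOf c).natDegree ≤ M := by
  rw [Polynomial.natDegree_le_iff_coeff_eq_zero]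
  intro m hm
  rw [coeff_polyOf, dif_neg (by omega)]


lemma exists_good (Q : ℝ) (hQ : 1 < Q) (α : LaurentSeries Fq) (hα : absv α < 1) :
    ∃ r a : Polynomial Fq, r.Monic ∧ ((r.natDegree : ℝ) ≤ Q) ∧
      absv (toK a) < absv (toK r) ∧ IsCoprime a r ∧
      absv (toK r * α - toK a) < (Fintype.card Fq : ℝ) ^ (-Q) := by
  classical
  set N : ℕ := ⌊Q⌋₊ with hN
  have hN1 : 1 ≤ N := Nat.le_floor (by exact_mod_cast hQ.le)
  have hNQ : (N : ℝ) ≤ Q := Nat.floor_le (by linarith)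
  have hQN : Q < (N : ℝ) + 1 := Nat.lt_floor_add_one Q
  -- pigeonhole
  obtain ⟨c₁, c₂, hc, hF⟩ := Fintype.exists_ne_map_eq_of_card_lt
    (fun (c : Fin (N+1) → Fq) (j : Fin N) => (toK (polyOf c) * α).coeff ((j:ℕ) + 1))
    (by
      rw [Fintype.card_fun, Fintype.card_fun, Fintype.card_fin, Fintype.card_fin]
      exact Nat.pow_lt_pow_right Fintype.one_lt_card (Nat.lt_succ_self N))
  set r₀ : Polynomial Fq := polyOf c₁ - polyOf c₂ with hr₀def
  have hr₀ : r₀ ≠ 0 := by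
    intro h
    apply hc
    funext i
    have := congrArg (fun p => Polynomial.coeff p (i:ℕ)) (sub_eq_zero.mp h)
    simpa [coeff_polyOf, i.isLt] using this
  have hdeg₀ : r₀.natDegree ≤ N :=
    le_trans (Polynomial.natDegree_sub_le _ _)
      (max_le (natDegree_polyOf_le c₁) (natDegree_polyOf_le c₂))
  set β : LaurentSeries Fq := toK r₀ * α with hβdef
  have hmid : ∀ n : ℤ, 1 ≤ n → n ≤ (N:ℤ) → β.coeff n = 0 := by
    intro n h1 h2
    have hjlt : (n-1).toNat < N := by omega
    have := congrFun hF ⟨(n-1).toNat, hjlt⟩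
    simp only at this
    have hn : (((n-1).toNat : ℕ) : ℤ) + 1 = n := by omega
    rw [hn] at this
    rw [hβdef, hr₀def, toK_sub, sub_mul, HahnSeries.coeff_sub, this, sub_self]
  have hord : ∀ n : ℤ, n < -(N:ℤ) + 1 → β.coeff n = 0 := by
    intro n hn
    rcases eq_or_ne α 0 with hα0 | hα0
    · simp [hβdef, hα0]
    have hαord : 1 ≤ α.order := by
      by_contra hcon
      push_neg at hcon
      rw [absv_of_ne hα0,
        show (1:ℝ) = (Fintype.card Fq : ℝ) ^ ((0:ℤ):ℝ) by norm_num,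
        Real.rpow_lt_rpow_left_iff (hq1 Fq)] at hα
      have : -α.order < 0 := by exact_mod_cast hα
      omega
    have hβne : n < β.order ∨ β = 0 := by
      rcases eq_or_ne β 0 with h | h
      · exact Or.inr h
      refine Or.inl ?_
      have : β.order = (toK r₀).order + α.order :=
        HahnSeries.order_mul (toK_ne_zero hr₀) hα0
      rw [this, order_toK hr₀]
      have hd : (r₀.natDegree : ℤ) ≤ (N : ℤ) := by exact_mod_cast hdeg₀
      linarith
    rcases hβne with h | h
    · exact HahnSeries.coeff_eq_zero_of_lt_order h
    · simp [h]
  set a : Polynomial Fq :=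
    ∑ i ∈ Finset.range (N+1), Polynomial.monomial i (β.coeff (-(i:ℤ))) with hadef
  have coeff_a : ∀ k : ℕ, a.coeff k = if k ≤ N then β.coeff (-(k:ℤ)) else 0 := by
    intro k
    rw [hadef, Polynomial.finset_sum_coeff]
    simp only [Polynomial.coeff_monomial]
    rw [Finset.sum_ite_eq' (Finset.range (N+1)) k (fun i => β.coeff (-(i:ℤ)))]
    by_cases h : k ≤ N
    · rw [if_pos (Finset.mem_range.mpr (by omega)), if_pos h]
    · rw [if_neg (by simp; omega), if_neg h]
  have htoKa : ∀ n : ℤ, (toK a).coeff n =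
      if -(N:ℤ) ≤ n ∧ n ≤ 0 then β.coeff n else 0 := by
    intro n
    rw [coeff_toK]
    by_cases hn : n ≤ 0
    · rw [if_pos hn, coeff_a]
      by_cases h2 : -(N:ℤ) ≤ n
      · rw [if_pos (by omega), if_pos ⟨h2, hn⟩]
        congr 1
        omega
      · rw [if_neg (by omega), if_neg (by tauto)]
    · rw [if_neg hn, if_neg (by omega)]
  set γ : LaurentSeries Fq := β - toK a with hγdef
  have hγcoeff : ∀ n : ℤ, n ≤ (N:ℤ) → γ.coeff n = 0 := by
    intro n hn
    rw [hγdef, HahnSeries.coeff_sub, htoKa]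
    by_cases h1 : -(N:ℤ) ≤ n ∧ n ≤ 0
    · rw [if_pos h1]; ring
    · rw [if_neg h1, sub_zero]
      push_neg at h1
      by_cases h2 : n ≤ 0
      · refine hord n ?_
        by_contra hcn
        push_neg at hcn
        exact absurd (h1 (by omega)) (by omega)
      · exact hmid n (by omega) hn
  have hγabs : absv γ < (Fintype.card Fq : ℝ) ^ (-Q) := by
    rcases eq_or_ne γ 0 with h | h
    · rw [h, absv_zero]; positivity
    have hordγ : (N:ℤ) + 1 ≤ γ.order := by
      by_contra hcon
      push_neg at hcon
      exact HahnSeries.coeff_order_eq_zero.not.mpr h (hγcoeff _ (by omega))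
    rw [absv_of_ne h, Real.rpow_lt_rpow_left_iff (hq1 Fq)]
    have : ((-γ.order : ℤ) : ℝ) ≤ -((N:ℝ) + 1) := by
      push_cast
      have : ((N:ℝ) + 1) ≤ (γ.order : ℝ) := by exact_mod_cast hordγ
      linarith
    linarith
  -- basic absolute value facts
  have habsβ : absv β < absv (toK r₀) := by
    rw [hβdef, absv_mul]
    calc absv (toK r₀) * absv α < absv (toK r₀) * 1 :=
          mul_lt_mul_of_pos_left hα (absv_pos (toK_ne_zero hr₀))
      _ = absv (toK r₀) := mul_one _
  have hQpow_lt_one : (Fintype.card Fq : ℝ) ^ (-Q) < 1 :=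
    Real.rpow_lt_one_of_one_lt_of_neg (hq1 Fq) (by linarith)
  have habsa : absv (toK a) < absv (toK r₀) := by
    have h1 : toK a = β - γ := by rw [hγdef]; ring
    rw [h1]
    refine lt_of_le_of_lt (absv_sub_le β γ) (max_lt habsβ ?_)
    exact lt_of_lt_of_le (lt_trans hγabs hQpow_lt_one) (one_le_absv_toK hr₀)
  -- reduce to coprime
  set g : Polynomial Fq := EuclideanDomain.gcd a r₀ with hgdef
  have hg : g ≠ 0 := fun h => hr₀ (EuclideanDomain.gcd_eq_zero_iff.mp h).2
  obtain ⟨a', ha'⟩ : g ∣ a := EuclideanDomain.gcd_dvd_left a r₀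
  obtain ⟨r', hr'⟩ : g ∣ r₀ := EuclideanDomain.gcd_dvd_right a r₀
  have hr'ne : r' ≠ 0 := by rintro rfl; rw [mul_zero] at hr'; exact hr₀ hr'
  have hcop : IsCoprime a' r' := by
    obtain ⟨x, y, hxy⟩ : ∃ x y, g = a * x + r₀ * y :=
      ⟨_, _, EuclideanDomain.gcd_eq_gcd_ab a r₀⟩
    refine ⟨x, y, ?_⟩
    have h2 : g * 1 = g * (x * a' + y * r') := by
      conv_lhs => rw [mul_one, hxy, ha', hr']
      ring
    exact (mul_left_cancel₀ hg h2).symm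
  set δ : LaurentSeries Fq := toK r' * α - toK a' with hδdef
  have hfactor : toK g * δ = γ := by
    rw [hδdef, hγdef, hβdef, ha', hr', toK_mul, toK_mul]
    ring
  have hδabs : absv δ < (Fintype.card Fq : ℝ) ^ (-Q) := by
    refine lt_of_le_of_lt ?_ hγabs
    rw [← hfactor, absv_mul]
    calc absv δ = 1 * absv δ := (one_mul _).symm
      _ ≤ absv (toK g) * absv δ :=
          mul_le_mul_of_nonneg_right (one_le_absv_toK hg) (absv_nonneg _)
  have habsa' : absv (toK a') < absv (toK r') := by
    have h1 : absv (toK g) * absv (toK a') < absv (toK g) * absv (toK r') := by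
      rw [← absv_mul, ← absv_mul, ← toK_mul, ← toK_mul, ← ha', ← hr']
      exact habsa
    exact lt_of_mul_lt_mul_left h1 (absv_nonneg _)
  have hdeg' : (r'.natDegree : ℝ) ≤ Q := by
    have : r₀.natDegree = g.natDegree + r'.natDegree := by
      rw [hr']; exact Polynomial.natDegree_mul hg hr'ne
    have h2 : r'.natDegree ≤ N := by omega
    calc (r'.natDegree : ℝ) ≤ (N : ℝ) := by exact_mod_cast h2
      _ ≤ Q := hNQ
  -- monicize
  set u : Fq := (r'.leadingCoeff)⁻¹ with hudef
  have hu : u ≠ 0 := inv_ne_zero (mt Polynomial.leadingCoeff_eq_zero.mp hr'ne)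
  have hCu : (Polynomial.C u : Polynomial Fq) ≠ 0 := fun h => hu (by
    simpa using congrArg (fun p => Polynomial.coeff p 0) h)
  have habsCu : absv (toK (Polynomial.C u)) = 1 := by
    rw [absv_toK hCu, Polynomial.natDegree_C]
    norm_num
  refine ⟨r' * Polynomial.C u, a' * Polynomial.C u, ?_, ?_, ?_, ?_, ?_⟩
  · exact Polynomial.monic_mul_leadingCoeff_inv hr'ne
  · rwa [Polynomial.natDegree_mul_C hu]
  · rw [toK_mul, toK_mul, absv_mul, absv_mul, habsCu, mul_one, mul_one]
    exact habsa'
  · exact (isCoprime_mul_unit_right_left (Polynomial.isUnit_C.2 (isUnit_iff_ne_zero.2 hu)) _ _).2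
      ((isCoprime_mul_unit_right_right (Polynomial.isUnit_C.2 (isUnit_iff_ne_zero.2 hu)) _ _).2 hcop)
  · have : toK (r' * Polynomial.C u) * α - toK (a' * Polynomial.C u) =
        δ * toK (Polynomial.C u) := by
      rw [toK_mul, toK_mul, hδdef]; ring
    rw [this, absv_mul, habsCu, mul_one]
    exact hδabs


lemma unique_good (Q : ℝ) (α : LaurentSeries Fq)
    {r₁ a₁ r₂ a₂ : Polynomial Fq}
    (hm₁ : r₁.Monic) (hd₁ : (r₁.natDegree : ℝ) ≤ Q) (hc₁ : IsCoprime a₁ r₁)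
    (hb₁ : absv (toK r₁ * α - toK a₁) < (Fintype.card Fq : ℝ) ^ (-Q))
    (hm₂ : r₂.Monic) (hd₂ : (r₂.natDegree : ℝ) ≤ Q) (hc₂ : IsCoprime a₂ r₂)
    (hb₂ : absv (toK r₂ * α - toK a₂) < (Fintype.card Fq : ℝ) ^ (-Q)) :
    r₁ = r₂ ∧ a₁ = a₂ := by
  have key : ∀ (r e : Polynomial Fq) (z : LaurentSeries Fq), r ≠ 0 → ((r.natDegree:ℝ) ≤ Q) →
      absv z < (Fintype.card Fq : ℝ) ^ (-Q) → absv (toK r * z) < 1 := by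
    intro r e z hr hd hz
    rw [absv_mul]
    have h1 : absv (toK r) ≤ (Fintype.card Fq : ℝ) ^ Q := by
      rw [absv_toK hr, Real.rpow_le_rpow_left_iff (hq1 Fq)]
      exact hd
    have := mul_lt_mul' h1 hz (absv_nonneg _) (by positivity)
    rwa [← Real.rpow_add (hq0 Fq), add_neg_cancel, Real.rpow_zero] at this
  have hd0 : r₁ * a₂ - r₂ * a₁ = 0 := by
    by_contra hne
    have hrepr : toK (r₁ * a₂ - r₂ * a₁) =
        toK r₂ * (toK r₁ * α - toK a₁) - toK r₁ * (toK r₂ * α - toK a₂) := by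
      rw [toK_sub, toK_mul, toK_mul]
      ring
    have habs : absv (toK (r₁ * a₂ - r₂ * a₁)) < 1 := by
      rw [hrepr]
      refine lt_of_le_of_lt (absv_sub_le _ _) (max_lt ?_ ?_)
      · exact key r₂ a₂ _ hm₂.ne_zero hd₂ hb₁
      · exact key r₁ a₁ _ hm₁.ne_zero hd₁ hb₂
    exact absurd habs (not_lt.2 (one_le_absv_toK hne))
  have heq : r₁ * a₂ = r₂ * a₁ := sub_eq_zero.mp hd0
  have hdvd₁ : r₁ ∣ r₂ := by
    refine (hc₁.symm).dvd_of_dvd_mul_right ⟨a₂, heq.symm⟩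
  have hdvd₂ : r₂ ∣ r₁ := by
    refine (hc₂.symm).dvd_of_dvd_mul_right ⟨a₁, heq⟩
  have hr : r₁ = r₂ :=
    Polynomial.eq_of_monic_of_associated hm₁ hm₂ (associated_of_dvd_dvd hdvd₁ hdvd₂)
  refine ⟨hr, ?_⟩
  subst hr
  exact (mul_left_cancel₀ hm₁.ne_zero heq).symm

end Farey

end FF

open FF in
/-- Farey dissection; Browning–Vishe Lemma 4.2.  For any real `Q > 1`,
the unit ball `𝕋 = {|α| < 1}` of `K_∞` is the disjoint union, over monic `r ∈ 𝔽_q[t]` with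
`|r| ≤ q^Q` and `a` with `|a| < |r|`, `gcd(a,r) = 1`, of the sets `{α : |rα - a| < q^{-Q}}`:
i.e. every `α ∈ 𝕋` lies in exactly one such set. -/
theorem farey_dissection {Fq : Type*} [Field Fq] [Fintype Fq]
    (Q : ℝ) (hQ : 1 < Q) (α : LaurentSeries Fq) (hα : absv α < 1) :
    ∃! p : Polynomial Fq × Polynomial Fq,
      (p.1.Monic ∧ ((Fintype.card Fq : ℝ) ^ p.1.natDegree ≤ (Fintype.card Fq : ℝ) ^ Q) ∧
        absv (toK p.2) < absv (toK p.1) ∧ IsCoprime p.2 p.1) ∧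
      absv (toK p.1 * α - toK p.2) < (Fintype.card Fq : ℝ) ^ (-Q) := by
  have hdegiff : ∀ r : Polynomial Fq,
      ((Fintype.card Fq : ℝ) ^ r.natDegree ≤ (Fintype.card Fq : ℝ) ^ Q) ↔
        ((r.natDegree : ℝ) ≤ Q) := by
    intro r
    rw [← Real.rpow_natCast (Fintype.card Fq : ℝ) r.natDegree,
      Real.rpow_le_rpow_left_iff (FF.Farey.hq1 Fq)]
  obtain ⟨r, a, hmon, hdeg, habs, hcop, hball⟩ := FF.Farey.exists_good Q hQ α hα
  refine ⟨(r, a), ⟨⟨hmon, (hdegiff r).mpr hdeg, habs, hcop⟩, hball⟩, ?_⟩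
  rintro ⟨r₂, a₂⟩ ⟨⟨hm₂, hd₂, hab₂, hc₂⟩, hb₂⟩
  obtain ⟨h1, h2⟩ := FF.Farey.unique_good Q α hm₂ ((hdegiff r₂).mp hd₂) hc₂ hb₂ hmon hdeg hcop hball
  exact Prod.ext h1 h2
end
end

section
/- Let q be odd and A ∈ M_{d×d}(K_∞) a symmetric matrix, where K_∞ = F_q((1/t)). Then there exists γ ∈ GL_d(O_∞), where O_∞ = {x ∈ K_∞ : |x| ≤ 1}, such that γ^T A γ is a diagonal matrix. -/
/-!
Common setup: `K_∞ = 𝔽_q((1/t))` is modeled as `LaurentSeries Fq` in the variable `X = 1/t`,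
so that an element `Σ_{i ≤ N} a_i t^i` of `K_∞` corresponds to the Hahn series
`Σ_{n ≥ -N} a_{-n} X^n`.  The degree in `t` is the negative of the Hahn-series order,
the absolute value is `|α| = q^{deg_t α}`, and the standard additive character is
`ψ(α) = e_q(coefficient of t^{-1}) = e_q(coefficient of X^1)`.
-/

open scoped BigOperators Classical
noncomputable section



namespace FF
variable {Fq : Type*} [Field Fq] [Fintype Fq]

lemma one_lt_q : (1:ℝ) < (Fintype.card Fq : ℝ) := by
  exact_mod_cast Fintype.one_lt_card

lemma absv_nonneg (x : LaurentSeries Fq) : 0 ≤ absv x := by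
  unfold absv; split
  · exact le_refl _
  · have := @one_lt_q Fq _ _; positivity

@[simp] lemma absv_zero : absv (0 : LaurentSeries Fq) = 0 := by simp [absv]

lemma absv_eq_zero {x : LaurentSeries Fq} : absv x = 0 ↔ x = 0 := by
  unfold absv; split
  · simpa
  · rename_i h
    constructor
    · intro hz; exfalso
      have := @one_lt_q Fq _ _
      have : (0:ℝ) < (Fintype.card Fq : ℝ) ^ (-x.order) := by positivity
      linarith
    · intro h'; exact absurd h' h

lemma absv_pos {x : LaurentSeries Fq} (hx : x ≠ 0) : 0 < absv x :=
  lt_of_le_of_ne (absv_nonneg x) (fun h => hx (absv_eq_zero.mp h.symm))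

lemma absv_ne_zero {x : LaurentSeries Fq} (hx : x ≠ 0) : absv x ≠ 0 :=
  (absv_pos hx).ne'

@[simp] lemma absv_one : absv (1 : LaurentSeries Fq) = 1 := by
  rw [absv, if_neg one_ne_zero, HahnSeries.order_one]; simp

lemma absv_mul (x y : LaurentSeries Fq) : absv (x*y) = absv x * absv y := by
  by_cases hx : x = 0; · simp [hx]
  by_cases hy : y = 0; · simp [hy]
  rw [absv, absv, absv, if_neg hx, if_neg hy, if_neg (mul_ne_zero hx hy),
    HahnSeries.order_mul hx hy, neg_add, zpow_add₀]
  positivity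

lemma absv_neg (x : LaurentSeries Fq) : absv (-x) = absv x := by
  by_cases hx : x = 0; · simp [hx]
  rw [absv, absv, if_neg hx, if_neg (neg_ne_zero.mpr hx), HahnSeries.order_neg]

lemma absv_mono {x y : LaurentSeries Fq} (h : y.order ≤ x.order) (hy : y ≠ 0) :
    absv x ≤ absv y := by
  by_cases hx : x = 0; · simp [hx, (absv_nonneg y)]
  rw [absv, absv, if_neg hx, if_neg hy]
  exact zpow_le_zpow_right₀ one_lt_q.le (neg_le_neg h)

lemma absv_add_le (x y : LaurentSeries Fq) :
    absv (x + y) ≤ max (absv x) (absv y) := by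
  by_cases hx : x = 0; · simp [hx, le_max_right]
  by_cases hy : y = 0; · simp [hy, le_max_left]
  by_cases hxy : x + y = 0
  · simp [hxy]; left; exact absv_nonneg x
  have := HahnSeries.min_order_le_order_add hxy
  rcases min_le_iff.mp (le_refl (min x.order y.order)) with h | h
  · rcases le_or_gt x.order y.order with h2 | h2
    · exact le_max_of_le_left (absv_mono (le_trans (by simp [min_eq_left h2]) this) hx)
    · exact le_max_of_le_right (absv_mono (le_trans (by simp [min_eq_right h2.le]) this) hy)
  · rcases le_or_gt x.order y.order with h2 | h2
    · exact le_max_of_le_left (absv_mono (le_trans (by simp [min_eq_left h2]) this) hx)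
    · exact le_max_of_le_right (absv_mono (le_trans (by simp [min_eq_right h2.le]) this) hy)

lemma absv_add_le' {x y : LaurentSeries Fq} {B : ℝ} (hx : absv x ≤ B) (hy : absv y ≤ B) :
    absv (x + y) ≤ B := le_trans (absv_add_le x y) (max_le hx hy)

lemma absv_sum_le {ι : Type*} (s : Finset ι) (f : ι → LaurentSeries Fq) {B : ℝ}
    (hB : 0 ≤ B) (h : ∀ i ∈ s, absv (f i) ≤ B) : absv (∑ i ∈ s, f i) ≤ B := by
  classical
  induction s using Finset.induction with
  | empty => simpa using hB
  | insert _ _ hnotin ih =>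
    rename_i a s
    rw [Finset.sum_insert hnotin]
    exact absv_add_le' (h a (Finset.mem_insert_self a s))
      (ih fun i hi => h i (Finset.mem_insert_of_mem hi))

lemma absv_prod_le_one {ι : Type*} (s : Finset ι) (f : ι → LaurentSeries Fq)
    (h : ∀ i ∈ s, absv (f i) ≤ 1) : absv (∏ i ∈ s, f i) ≤ 1 := by
  classical
  induction s using Finset.induction with
  | empty => simp
  | insert _ _ hnotin ih =>
    rename_i a s
    rw [Finset.prod_insert hnotin, absv_mul]
    exact mul_le_one₀ (h a (Finset.mem_insert_self a s)) (absv_nonneg _)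
      (ih fun i hi => h i (Finset.mem_insert_of_mem hi))

lemma absv_div_le_one {x y : LaurentSeries Fq} (hy : y ≠ 0) (h : absv x ≤ absv y) :
    absv (x / y) ≤ 1 := by
  rw [div_eq_mul_inv]
  have hinv : absv y * absv y⁻¹ = 1 := by
    rw [← absv_mul, mul_inv_cancel₀ hy, absv_one]
  rw [absv_mul]
  have hypos := absv_pos hy
  have : absv y⁻¹ = (absv y)⁻¹ := by field_simp at hinv ⊢; linarith
  rw [this]
  rw [mul_inv_le_iff₀ hypos, one_mul]; exact h

end FF
namespace FF
variable {Fq : Type*} [Field Fq] [Fintype Fq]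

lemma absv_C {a : Fq} (ha : a ≠ 0) : absv (HahnSeries.C a : LaurentSeries Fq) = 1 := by
  rw [absv, if_neg (by simpa using ha), HahnSeries.order_C]; simp

lemma two_ne_zero_of_odd (hq : Odd (Fintype.card Fq)) : (2 : Fq) ≠ 0 := by
  intro h
  haveI : CharP Fq (ringChar Fq) := ringChar.charP Fq
  have hpr : (ringChar Fq).Prime := CharP.char_is_prime Fq (ringChar Fq)
  have hdvd : ringChar Fq ∣ 2 :=
    (CharP.cast_eq_zero_iff Fq (ringChar Fq) 2).mp (by exact_mod_cast h)
  have h2 : ringChar Fq = 2 := (Nat.prime_dvd_prime_iff_eq hpr Nat.prime_two).mp hdvd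
  obtain ⟨n, _, hcard⟩ := FiniteField.card Fq (ringChar Fq)
  rw [h2] at hcard
  rw [hcard] at hq
  have : Even ((2:ℕ) ^ (n:ℕ)) := (Nat.even_pow' (by simp [n.ne_zero])).mpr even_two
  exact (Nat.not_odd_iff_even.mpr this) hq

lemma four_ne_zero_of_odd (hq : Odd (Fintype.card Fq)) : (4 : Fq) ≠ 0 := by
  have h2 := two_ne_zero_of_odd hq
  have : (4 : Fq) = 2 * 2 := by norm_num
  rw [this]; exact mul_ne_zero h2 h2

end FF

namespace FF
variable {Fq : Type*} [Field Fq] [Fintype Fq]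
variable {n : Type*} [Fintype n] [DecidableEq n]

abbrev Kk (Fq : Type*) [Field Fq] := LaurentSeries Fq

def Intl (γ : Matrix n n (Kk Fq)) : Prop := ∀ i j, absv (γ i j) ≤ 1

def Uni (γ : Matrix n n (Kk Fq)) : Prop :=
  Intl γ ∧ ∃ δ : Matrix n n (Kk Fq), Intl δ ∧ γ * δ = 1 ∧ δ * γ = 1

lemma Intl.one : Intl (1 : Matrix n n (Kk Fq)) := by
  intro i j
  by_cases h : i = j <;> simp [Matrix.one_apply, h]

lemma Intl.mul {γ δ : Matrix n n (Kk Fq)} (hγ : Intl γ) (hδ : Intl δ) : Intl (γ * δ) := by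
  intro i j
  rw [Matrix.mul_apply]
  refine absv_sum_le _ _ zero_le_one fun k _ => ?_
  rw [absv_mul]
  exact mul_le_one₀ (hγ i k) (absv_nonneg _) (hδ k j)

lemma Uni.one : Uni (1 : Matrix n n (Kk Fq)) :=
  ⟨Intl.one, 1, Intl.one, by simp, by simp⟩

lemma Uni.mul {γ δ : Matrix n n (Kk Fq)} (hγ : Uni γ) (hδ : Uni δ) : Uni (γ * δ) := by
  obtain ⟨h1, γ', h2, h3, h4⟩ := hγ
  obtain ⟨h5, δ', h6, h7, h8⟩ := hδ
  refine ⟨h1.mul h5, δ' * γ', h6.mul h2, ?_, ?_⟩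
  · rw [Matrix.mul_assoc, ← Matrix.mul_assoc δ, h7, Matrix.one_mul, h3]
  · rw [Matrix.mul_assoc, ← Matrix.mul_assoc γ', h4, Matrix.one_mul, h8]

lemma absv_det_le_one {γ : Matrix n n (Kk Fq)} (hγ : Intl γ) : absv γ.det ≤ 1 := by
  rw [Matrix.det_apply]
  refine absv_sum_le _ _ zero_le_one fun σ _ => ?_
  have hprod : absv (∏ i, γ (σ i) i) ≤ 1 :=
    absv_prod_le_one _ _ fun i _ => hγ (σ i) i
  rcases Int.units_eq_one_or (Equiv.Perm.sign σ) with h | h <;> rw [h]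
  · simp only [Units.smul_def, Units.val_one, one_zsmul]; exact hprod
  · simp only [Units.smul_def, Units.val_neg, Units.val_one, neg_zsmul, one_zsmul, absv_neg]
    exact hprod

lemma Uni.absv_det {γ : Matrix n n (Kk Fq)} (hγ : Uni γ) : absv γ.det = 1 := by
  obtain ⟨h1, δ, h2, h3, _⟩ := hγ
  have hdet : γ.det * δ.det = 1 := by rw [← Matrix.det_mul, h3, Matrix.det_one]
  have h4 : absv γ.det * absv δ.det = 1 := by rw [← absv_mul, hdet, absv_one]
  have h5 := absv_det_le_one h1
  have h6 := absv_det_le_one h2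
  have h7 := absv_nonneg γ.det
  have h8 := absv_nonneg δ.det
  nlinarith

end FF

set_option linter.unusedSectionVars false

namespace FF
variable {Fq : Type*} [Field Fq] [Fintype Fq]
variable {n : Type*} [Fintype n] [DecidableEq n]

lemma IsSymm.conj {A γ : Matrix n n (Kk Fq)} (hA : A.IsSymm) :
    (γ.transpose * A * γ).IsSymm := by
  unfold Matrix.IsSymm at *
  rw [Matrix.transpose_mul, Matrix.transpose_mul, Matrix.transpose_transpose, hA,
    Matrix.mul_assoc]

/-- The clearing step: given a symmetric matrix `B` whose `(p,p)` entry is nonzero and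
dominates all entries, there is a unimodular `γ` with `(γᵀBγ) p j = 0` for `j ≠ p`. -/
lemma clear_step {B : Matrix n n (Kk Fq)} (hB : B.IsSymm) (p : n) (hp : B p p ≠ 0)
    (hmax : ∀ i j, absv (B i j) ≤ absv (B p p)) :
    ∃ γ : Matrix n n (Kk Fq), Uni γ ∧
      (∀ j, j ≠ p → (γ.transpose * B * γ) p j = 0) := by
  set U : Matrix n n (Kk Fq) :=
    Matrix.of (fun i j => if i = p ∧ j ≠ p then -(B p j / B p p) else 0) with hU
  have hUentry : ∀ i j, absv (U i j) ≤ 1 := by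
    intro i j
    show absv (if i = p ∧ j ≠ p then -(B p j / B p p) else 0) ≤ 1
    split
    · rw [absv_neg]; exact absv_div_le_one hp (hmax p j)
    · simp
  have hUsq : U * U = 0 := by
    refine Matrix.ext fun i j => ?_
    rw [Matrix.mul_apply, Matrix.zero_apply]
    apply Finset.sum_eq_zero
    intro k _
    by_cases hk : k = p
    · have h1 : U i k = 0 := by simp [hU, Matrix.of_apply, hk]
      rw [h1, zero_mul]
    · have h1 : U k j = 0 := by simp [hU, Matrix.of_apply, hk]
      rw [h1, mul_zero]
  have hUUt : ∀ k, U.transpose p k = 0 := by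
    intro k; show U k p = 0; simp [hU, Matrix.of_apply]
  have hrow : ∀ (M : Matrix n n (Kk Fq)) j, (U.transpose * M) p j = 0 := by
    intro M j
    rw [Matrix.mul_apply]
    exact Finset.sum_eq_zero fun k _ => by rw [hUUt k, zero_mul]
  refine ⟨1 + U, ⟨?_, 1 - U, ?_, ?_, ?_⟩, ?_⟩
  · intro i j
    by_cases hij : i = j
    · subst hij
      have : U i i = 0 := by simp [hU, Matrix.of_apply]
      simp [Matrix.add_apply, Matrix.one_apply, this]
    · have h1 : (1 : Matrix n n (Kk Fq)) i j = 0 := Matrix.one_apply_ne hij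
      simp only [Matrix.add_apply, h1, zero_add]
      exact hUentry i j
  · intro i j
    by_cases hij : i = j
    · subst hij
      have : U i i = 0 := by simp [hU, Matrix.of_apply]
      simp [Matrix.sub_apply, Matrix.one_apply, this]
    · have h1 : (1 : Matrix n n (Kk Fq)) i j = 0 := Matrix.one_apply_ne hij
      simp only [Matrix.sub_apply, h1, zero_sub, absv_neg]
      exact hUentry i j
  · rw [add_mul, one_mul, mul_sub, mul_one, hUsq, sub_zero]; abel
  · rw [sub_mul, one_mul, mul_add, mul_one, hUsq, add_zero, add_sub_cancel_right]
  · intro j hj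
    have hexp : (1 + U).transpose * B * (1 + U)
        = B + B * U + (U.transpose * B + U.transpose * (B * U)) := by
      rw [Matrix.transpose_add, Matrix.transpose_one]
      noncomm_ring
    rw [hexp]
    simp only [Matrix.add_apply, hrow]
    have hBU : (B * U) p j = - B p j := by
      rw [Matrix.mul_apply]
      rw [Finset.sum_eq_single p]
      · show B p p * (if p = p ∧ j ≠ p then -(B p j / B p p) else 0) = _
        rw [if_pos ⟨rfl, hj⟩]
        have h2 := mul_div_cancel₀ (B p j) hp
        linear_combination -h2
      · intro k _ hk
        have : U k j = 0 := by simp [hU, hk]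
        rw [this, mul_zero]
      · intro h; exact absurd (Finset.mem_univ p) h
    rw [hBU]; ring

end FF

namespace FF
variable {Fq : Type*} [Field Fq] [Fintype Fq]
variable {n : Type*} [Fintype n] [DecidableEq n]

lemma entries_mul_left_bound {m : ℝ} {T A : Matrix n n (Kk Fq)} (hT : Intl T)
    (hA : ∀ i j, absv (A i j) ≤ m) (hm : 0 ≤ m) : ∀ i j, absv ((T * A) i j) ≤ m := by
  intro i j
  rw [Matrix.mul_apply]
  refine absv_sum_le _ _ hm fun k _ => ?_
  rw [absv_mul]
  calc absv (T i k) * absv (A k j) ≤ 1 * m :=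
        mul_le_mul (hT i k) (hA k j) (absv_nonneg _) zero_le_one
    _ = m := one_mul m

lemma entries_mul_right_bound {m : ℝ} {T A : Matrix n n (Kk Fq)} (hT : Intl T)
    (hA : ∀ i j, absv (A i j) ≤ m) (hm : 0 ≤ m) : ∀ i j, absv ((A * T) i j) ≤ m := by
  intro i j
  rw [Matrix.mul_apply]
  refine absv_sum_le _ _ hm fun k _ => ?_
  rw [absv_mul, mul_comm]
  calc absv (T k j) * absv (A i k) ≤ 1 * m :=
        mul_le_mul (hT k j) (hA i k) (absv_nonneg _) zero_le_one
    _ = m := one_mul m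

lemma Intl.transpose {T : Matrix n n (Kk Fq)} (hT : Intl T) : Intl T.transpose :=
  fun i j => hT j i

lemma conj_bound {m : ℝ} {T A : Matrix n n (Kk Fq)} (hT : Intl T)
    (hA : ∀ i j, absv (A i j) ≤ m) (hm : 0 ≤ m) :
    ∀ i j, absv ((T.transpose * A * T) i j) ≤ m :=
  entries_mul_right_bound hT (entries_mul_left_bound hT.transpose hA hm) hm

lemma pick_sign {Fq : Type*} [Field Fq] [Fintype Fq] {x y z : Kk Fq} {m : ℝ}
    (h4 : absv ((4 : Kk Fq) * y) = m) (hm : 0 < m) :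
    ∃ c : Kk Fq, absv c ≤ 1 ∧
      m ≤ absv (x + y * c + (c * y + c * (z * c))) := by
  have hone : absv (1 : Kk Fq) ≤ 1 := le_of_eq absv_one
  have hnegone : absv (-1 : Kk Fq) ≤ 1 := by rw [absv_neg]; exact hone
  set d1 : Kk Fq := x + y * 1 + (1 * y + 1 * (z * 1)) with hd1
  set dm : Kk Fq := x + y * (-1) + (-1 * y + -1 * (z * -1)) with hdm
  have hdiff : d1 - dm = (4 : Kk Fq) * y := by rw [hd1, hdm]; ring
  by_contra hcon
  push_neg at hcon
  have hc1 := hcon 1 hone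
  have hcm := hcon (-1) hnegone
  have hlt : absv (d1 - dm) < m := by
    rw [sub_eq_add_neg]
    calc absv (d1 + -dm) ≤ max (absv d1) (absv (-dm)) := absv_add_le _ _
      _ < m := by rw [absv_neg]; exact max_lt hc1 hcm
  rw [hdiff, h4] at hlt
  exact lt_irrefl m hlt

lemma pivot_step (hq : Odd (Fintype.card Fq)) {A : Matrix n n (Kk Fq)} (hA : A.IsSymm)
    {i0 j0 : n} (hne : A i0 j0 ≠ 0)
    (hmax : ∀ i j, absv (A i j) ≤ absv (A i0 j0)) :
    ∃ (τ : Matrix n n (Kk Fq)) (p : n), Uni τ ∧ (τ.transpose * A * τ) p p ≠ 0 ∧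
      ∀ i j, absv ((τ.transpose * A * τ) i j) ≤ absv ((τ.transpose * A * τ) p p) := by
  have hsymm : ∀ i j, A j i = A i j := fun i j => hA.apply i j
  set m := absv (A i0 j0) with hm
  have hm0 : 0 < m := absv_pos hne
  by_cases hij : i0 = j0
  · subst hij
    have hB : (1 : Matrix n n (Kk Fq)).transpose * A * 1 = A := by
      rw [Matrix.transpose_one, Matrix.one_mul, Matrix.mul_one]
    exact ⟨1, i0, Uni.one, by rw [hB]; exact hne, by rw [hB]; exact hmax⟩
  · -- off-diagonal pivot
    have h4 : absv ((4 : Kk Fq) * A i0 j0) = m := by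
      have hC : ((4 : Kk Fq)) = HahnSeries.C (4 : Fq) := (map_ofNat (HahnSeries.C (R := Fq)) 4).symm
      rw [absv_mul, hC, absv_C (four_ne_zero_of_odd hq), one_mul]
    set E : Kk Fq → Matrix n n (Kk Fq) := fun c => Matrix.single j0 i0 c with hE
    have hEt : ∀ c, (E c).transpose = Matrix.single i0 j0 c := by
      intro c
      refine Matrix.ext fun a b => ?_
      simp [hE, Matrix.transpose_apply, Matrix.single, and_comm]
    have hexp : ∀ c, (1 + E c).transpose * A * (1 + E c)
        = A + A * E c + ((E c).transpose * A + (E c).transpose * (A * E c)) := by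
      intro c
      rw [Matrix.transpose_add, Matrix.transpose_one]
      noncomm_ring
    have hBval : ∀ c, ((1 + E c).transpose * A * (1 + E c)) i0 i0
        = A i0 i0 + A i0 j0 * c + (c * A i0 j0 + c * (A j0 j0 * c)) := by
      intro c
      rw [hexp c, Matrix.add_apply, Matrix.add_apply, Matrix.add_apply]
      have h1 : (A * E c) i0 i0 = A i0 j0 * c := by
        simp only [hE]; exact Matrix.mul_single_apply_same _ _ _ _ _
      have h2 : ((E c).transpose * A) i0 i0 = c * A j0 i0 := by
        rw [hEt]; exact Matrix.single_mul_apply_same _ _ _ _ _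
      have h3 : ((E c).transpose * (A * E c)) i0 i0 = c * (A j0 j0 * c) := by
        rw [hEt]
        rw [Matrix.single_mul_apply_same]
        simp only [hE]; rw [Matrix.mul_single_apply_same]
      rw [h1, h2, h3, hsymm j0 i0]
    obtain ⟨c, hc1, hcge⟩ := pick_sign (x := A i0 i0) (z := A j0 j0) h4 hm0
    -- the transvection τ = 1 + E c
    have hEmul : ∀ c c' : Kk Fq, E c * E c' = 0 := by
      intro c c'
      simp only [hE]
      refine Matrix.ext fun a b => ?_
      rw [Matrix.mul_apply, Matrix.zero_apply]
      apply Finset.sum_eq_zero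
      intro k _
      by_cases hk : k = i0
      · have h2 : Matrix.single j0 i0 c' k b = 0 := by
          apply Matrix.single_apply_of_ne
          rintro ⟨h1, -⟩
          exact hij (h1.trans hk).symm
        rw [h2, mul_zero]
      · have h2 : Matrix.single j0 i0 c a k = 0 := by
          apply Matrix.single_apply_of_ne
          rintro ⟨-, h1⟩
          exact hk h1.symm
        rw [h2, zero_mul]
    have hEadd : ∀ c : Kk Fq, E c + E (-c) = 0 := by
      intro c
      simp only [hE]
      show Matrix.single j0 i0 c + Matrix.single j0 i0 (-c) = 0
      rw [← Matrix.single_add, add_neg_cancel, Matrix.single_zero]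
    have hIntlE : ∀ c : Kk Fq, absv c ≤ 1 → Intl (1 + E c) := by
      intro c hc i j
      by_cases hmatch : i = j0 ∧ j = i0
      · obtain ⟨h1, h2⟩ := hmatch
        rw [Matrix.add_apply, h1, h2, Matrix.one_apply_ne (Ne.symm hij)]
        simp only [hE]
        rw [Matrix.single_apply_same, zero_add]
        exact hc
      · have hE0 : E c i j = 0 := by
          simp only [hE]
          apply Matrix.single_apply_of_ne
          rintro ⟨a, b⟩
          exact hmatch ⟨a.symm, b.symm⟩
        rw [Matrix.add_apply, hE0, add_zero]
        exact Intl.one i j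
    have hUniτ : ∀ c : Kk Fq, absv c ≤ 1 → Uni (1 + E c) := by
      intro c hc
      refine ⟨hIntlE c hc, 1 + E (-c), hIntlE (-c) (by rw [absv_neg]; exact hc), ?_, ?_⟩
      · calc (1 + E c) * (1 + E (-c)) = 1 + (E c + E (-c)) + E c * E (-c) := by noncomm_ring
          _ = 1 := by rw [hEadd, hEmul, add_zero, add_zero]
      · calc (1 + E (-c)) * (1 + E c) = 1 + (E c + E (-c)) + E (-c) * E c := by noncomm_ring
          _ = 1 := by rw [hEadd, hEmul, add_zero, add_zero]
    refine ⟨1 + E c, i0, hUniτ c hc1, ?_, ?_⟩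
    · rw [hBval c]
      intro h0
      rw [h0, absv_zero] at hcge
      exact absurd (lt_of_lt_of_le hm0 hcge) (lt_irrefl 0)
    · intro i j
      have hb := conj_bound (hIntlE c hc1) hmax hm0.le i j
      calc absv (((1 + E c).transpose * A * (1 + E c)) i j) ≤ m := hb
        _ ≤ absv (((1 + E c).transpose * A * (1 + E c)) i0 i0) := by
            rw [hBval c]; exact hcge

end FF

namespace FF
variable {Fq : Type*} [Field Fq] [Fintype Fq]

lemma isDiag_fin_one {M : Matrix (Fin 1) (Fin 1) (Kk Fq)} : M.IsDiag :=
  fun i j h => absurd (Subsingleton.elim i j) h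

theorem aux (hq : Odd (Fintype.card Fq)) :
    ∀ (d : ℕ) (A : Matrix (Fin d) (Fin d) (Kk Fq)), A.IsSymm →
      ∃ γ : Matrix (Fin d) (Fin d) (Kk Fq), Uni γ ∧ (γ.transpose * A * γ).IsDiag := by
  intro d
  induction d with
  | zero => exact fun A _ => ⟨1, Uni.one, fun i => i.elim0⟩
  | succ d ih =>
    intro A hA
    by_cases hA0 : A = 0
    · refine ⟨1, Uni.one, ?_⟩
      subst hA0
      rw [Matrix.mul_zero, Matrix.zero_mul]
      exact Matrix.isDiag_zero
    · obtain ⟨q0, -, hmax⟩ := Finset.exists_max_image (Finset.univ : Finset (Fin (d+1) × Fin (d+1)))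
        (fun q => absv (A q.1 q.2)) ⟨(0,0), Finset.mem_univ _⟩
      obtain ⟨i0, j0⟩ := q0
      have hmax' : ∀ i j, absv (A i j) ≤ absv (A i0 j0) := fun i j => hmax (i,j) (Finset.mem_univ _)
      have hne : A i0 j0 ≠ 0 := by
        obtain ⟨i, j, hij⟩ : ∃ i j, A i j ≠ 0 := by
          by_contra h
          push_neg at h
          exact hA0 (Matrix.ext fun i j => h i j)
        intro h0
        have h1 := hmax' i j
        rw [h0, absv_zero] at h1
        exact absurd (lt_of_lt_of_le (absv_pos hij) h1) (lt_irrefl 0)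
      obtain ⟨τ, p, hUτ, hBp, hBmax⟩ := pivot_step hq hA hne hmax'
      set B := τ.transpose * A * τ with hB
      have hBsymm : B.IsSymm := IsSymm.conj hA
      obtain ⟨g, hUg, hclear⟩ := clear_step hBsymm p hBp hBmax
      set C := g.transpose * B * g with hC
      have hCsymm : C.IsSymm := IsSymm.conj hBsymm
      have hCcol : ∀ j, j ≠ p → C j p = 0 := fun j hj => (hCsymm.apply p j).trans (hclear j hj)
      set e : (Fin 1 ⊕ Fin d) ≃ Fin (d+1) :=
        ((finSumFinEquiv.trans (finCongr (Nat.add_comm 1 d))).trans (Equiv.swap 0 p)) with he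
      have hep : e (Sum.inl 0) = p := by
        have h0 : (finSumFinEquiv.trans (finCongr (Nat.add_comm 1 d))) (Sum.inl (0 : Fin 1))
            = (0 : Fin (d+1)) := by
          apply Fin.ext
          simp [finSumFinEquiv]
        rw [he]
        show (Equiv.swap (0 : Fin (d+1)) p) ((finSumFinEquiv.trans (finCongr (Nat.add_comm 1 d))) (Sum.inl 0)) = p
        rw [h0, Equiv.swap_apply_left]
      have hinr : ∀ i : Fin d, e (Sum.inr i) ≠ p := by
        intro i h
        have h2 := e.injective (h.trans hep.symm)
        exact Sum.inr_ne_inl h2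
      set D : Matrix (Fin d) (Fin d) (Kk Fq) :=
        Matrix.of (fun i j => C (e (Sum.inr i)) (e (Sum.inr j))) with hD
      have hDsymm : D.IsSymm := Matrix.ext fun i j => hCsymm.apply _ _
      obtain ⟨δ, hUδ, hδdiag⟩ := ih D hDsymm
      obtain ⟨hIδ, δ', hIδ', hδδ', hδ'δ⟩ := hUδ
      set G : Matrix (Fin 1 ⊕ Fin d) (Fin 1 ⊕ Fin d) (Kk Fq) := Matrix.fromBlocks 1 0 0 δ with hG
      set G' : Matrix (Fin 1 ⊕ Fin d) (Fin 1 ⊕ Fin d) (Kk Fq) := Matrix.fromBlocks 1 0 0 δ' with hG'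
      have hGG' : G * G' = 1 := by
        rw [hG, hG', Matrix.fromBlocks_multiply]
        simp only [Matrix.one_mul, Matrix.mul_zero, Matrix.zero_mul, Matrix.mul_one, add_zero,
          zero_add, hδδ']
        exact Matrix.fromBlocks_one
      have hG'G : G' * G = 1 := by
        rw [hG, hG', Matrix.fromBlocks_multiply]
        simp only [Matrix.one_mul, Matrix.mul_zero, Matrix.zero_mul, Matrix.mul_one, add_zero,
          zero_add, hδ'δ]
        exact Matrix.fromBlocks_one
      have hIntlG : ∀ ij kl, absv (G ij kl) ≤ 1 := by
        rintro (i|i) (j|j)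
        · exact Intl.one (Fq := Fq) (n := Fin 1) i j
        · show absv ((0 : Matrix (Fin 1) (Fin d) (Kk Fq)) i j) ≤ 1
          rw [Matrix.zero_apply, absv_zero]; exact zero_le_one
        · show absv ((0 : Matrix (Fin d) (Fin 1) (Kk Fq)) i j) ≤ 1
          rw [Matrix.zero_apply, absv_zero]; exact zero_le_one
        · exact hIδ i j
      have hIntlG' : ∀ ij kl, absv (G' ij kl) ≤ 1 := by
        rintro (i|i) (j|j)
        · exact Intl.one (Fq := Fq) (n := Fin 1) i j
        · show absv ((0 : Matrix (Fin 1) (Fin d) (Kk Fq)) i j) ≤ 1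
          rw [Matrix.zero_apply, absv_zero]; exact zero_le_one
        · show absv ((0 : Matrix (Fin d) (Fin 1) (Kk Fq)) i j) ≤ 1
          rw [Matrix.zero_apply, absv_zero]; exact zero_le_one
        · exact hIδ' i j
      set γ₃ : Matrix (Fin (d+1)) (Fin (d+1)) (Kk Fq) := G.submatrix e.symm e.symm with hγ₃
      have hUniγ₃ : Uni γ₃ := by
        refine ⟨fun i j => hIntlG _ _, G'.submatrix e.symm e.symm, fun i j => hIntlG' _ _, ?_, ?_⟩
        · rw [hγ₃, Matrix.submatrix_mul_equiv, hGG', Matrix.submatrix_one_equiv]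
        · rw [hγ₃, Matrix.submatrix_mul_equiv, hG'G, Matrix.submatrix_one_equiv]
      refine ⟨τ * g * γ₃, (hUτ.mul hUg).mul hUniγ₃, ?_⟩
      have hfinal : (τ * g * γ₃).transpose * A * (τ * g * γ₃) = γ₃.transpose * C * γ₃ := by
        rw [hC, hB, Matrix.transpose_mul, Matrix.transpose_mul]
        noncomm_ring
      rw [hfinal]
      have hCsub : C = (C.submatrix e e).submatrix e.symm e.symm := by
        rw [Matrix.submatrix_submatrix]
        simp only [Equiv.self_comp_symm, Matrix.submatrix_id_id]
      have hstep : γ₃.transpose * C * γ₃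
          = (G.transpose * (C.submatrix e e) * G).submatrix e.symm e.symm := by
        rw [hγ₃, Matrix.transpose_submatrix]
        conv_lhs => rw [hCsub]
        rw [Matrix.submatrix_mul_equiv, Matrix.submatrix_mul_equiv]
      rw [hstep]
      have hCblock : C.submatrix e e
          = Matrix.fromBlocks (Matrix.of fun _ _ => C p p) 0 0 D := by
        refine Matrix.ext ?_
        rintro (i|i) (j|j)
        · have hi : i = 0 := Subsingleton.elim _ _
          have hj : j = 0 := Subsingleton.elim _ _
          show C (e (Sum.inl i)) (e (Sum.inl j)) = C p p
          rw [hi, hj, hep]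
        · have hi : i = 0 := Subsingleton.elim _ _
          show C (e (Sum.inl i)) (e (Sum.inr j)) = 0
          rw [hi, hep]
          exact hclear _ (hinr j)
        · have hj : j = 0 := Subsingleton.elim _ _
          show C (e (Sum.inr i)) (e (Sum.inl j)) = 0
          rw [hj, hep]
          exact hCcol _ (hinr i)
        · rfl
      rw [hCblock, hG, Matrix.fromBlocks_transpose, Matrix.transpose_one, Matrix.transpose_zero,
        Matrix.fromBlocks_multiply, Matrix.fromBlocks_multiply]
      simp only [Matrix.transpose_zero, Matrix.one_mul, Matrix.mul_zero, Matrix.zero_mul,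
        Matrix.mul_one, add_zero, zero_add]
      have hdiagblock : (Matrix.fromBlocks (Matrix.of fun _ _ => C p p) 0 0
          (δ.transpose * D * δ)).IsDiag :=
        Matrix.IsDiag.fromBlocks isDiag_fin_one hδdiag
      intro i j hij
      show (Matrix.fromBlocks _ _ _ _) (e.symm i) (e.symm j) = 0
      exact hdiagblock (fun h => hij (e.symm.injective h))

end FF


open FF in
/-- diagonalization over `O_∞`.  Let `q` be odd and `A` a symmetric
`d × d` matrix over `K_∞ = 𝔽_q((1/t))`.  Then there is `γ ∈ GL_d(O_∞)` — i.e. a matrix with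
entries in the valuation ring `O_∞ = {|x| ≤ 1}` and `|det γ| = 1` — with `γᵀ A γ` diagonal. -/
theorem diagonalize_over_Oinfty {Fq : Type*} [Field Fq] [Fintype Fq]
    (hq : Odd (Fintype.card Fq)) {d : ℕ}
    (A : Matrix (Fin d) (Fin d) (LaurentSeries Fq)) (hA : A.IsSymm) :
    ∃ γ : Matrix (Fin d) (Fin d) (LaurentSeries Fq),
      (∀ i j, absv (γ i j) ≤ 1) ∧ absv γ.det = 1 ∧
        (γ.transpose * A * γ).IsDiag := by
  obtain ⟨γ, hUni, hdiag⟩ := FF.aux hq d A hA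
  exact ⟨γ, hUni.1, hUni.absv_det, hdiag⟩
end
end

section
/- Let q be odd, K_∞ = F_q((1/t)), 𝕋 = {|x| < 1}, and ψ the standard additive character. For f ∈ K_∞: if ord(f) = 2k with k ≥ 0, then ∫_𝕋 ψ(f u²) du = |f|^{-1/2}; if ord(f) = 2k−1 with k ≥ 1, then ∫_𝕋 ψ(f u²) du = |f|^{-1/2} ε_f, where ε_f = G(f)/|G(f)| and G(f) = Σ_{x∈F_q} e_q(a_f x²) with a_f the top coefficient of f; and if ord(f) ≤ −1, the integral equals 1. -/
/-!
Common setup: `K_∞ = 𝔽_q((1/t))` is modeled as `LaurentSeries Fq` in the variable `X = 1/t`,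
so that an element `Σ_{i ≤ N} a_i t^i` of `K_∞` corresponds to the Hahn series
`Σ_{n ≥ -N} a_{-n} X^n`.  The degree in `t` is the negative of the Hahn-series order,
the absolute value is `|α| = q^{deg_t α}`, and the standard additive character is
`ψ(α) = e_q(coefficient of t^{-1}) = e_q(coefficient of X^1)`.
-/

open scoped BigOperators Classical
noncomputable section



namespace FF
variable {Fq : Type*} [Field Fq] [Fintype Fq]

/-- The Gauss sum `G(f) = Σ_{x ∈ 𝔽_q} e_q(a_f x²)` attached to the top-degree (in `t`)
coefficient `a_f` of `f`. -/
def gaussSumTop (e : AddChar Fq ℂ) (f : LaurentSeries Fq) : ℂ :=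
  ∑ x : Fq, e (f.coeff f.order * x ^ 2)

/-- The normalized Gauss sum `ε_f = G(f)/|G(f)|`. -/
def epsFactor (e : AddChar Fq ℂ) (f : LaurentSeries Fq) : ℂ :=
  gaussSumTop e f / ‖gaussSumTop e f‖

end FF

namespace GIAux

open Finset

variable {Fq : Type*} [Field Fq] [Fintype Fq]

lemma char_sum (e : AddChar Fq ℂ) (he : e ≠ 1) (b : Fq) :
    ∑ y : Fq, e (y * b) = if b = 0 then (Fintype.card Fq : ℂ) else 0 := by
  have := AddChar.sum_mulShift b (AddChar.IsPrimitive.of_ne_one he)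
  rw [this]; split_ifs <;> simp

def QF (A : ℤ → Fq) (N : ℕ) (c : Fin N → Fq) : Fq :=
  ∑ i : Fin N, ∑ j : Fin N, A (-1 - ((i : ℕ) : ℤ) - ((j : ℕ) : ℤ)) * (c i * c j)

def SV (e : AddChar Fq ℂ) (A : ℤ → Fq) (N : ℕ) : ℂ :=
  ∑ c : Fin N → Fq, e (QF A N c)

lemma QF_succ (A : ℤ → Fq) {N M : ℕ} (h0 : ∀ m : ℤ, m < -(N : ℤ) → A m = 0) (hM : N ≤ M)
    (c : Fin (M + 1) → Fq) : QF A (M + 1) c = QF A M (c ∘ Fin.castSucc) := by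
  have hz : ∀ n : ℕ, A (-1 - (M : ℤ) - (n : ℤ)) = 0 := by
    intro n
    apply h0
    have : (N : ℤ) ≤ (M : ℤ) := by exact_mod_cast hM
    omega
  have hz' : ∀ n : ℕ, A (-1 - (n : ℤ) - (M : ℤ)) = 0 := by
    intro n; rw [show (-1 - (n:ℤ) - (M:ℤ)) = (-1 - (M:ℤ) - (n:ℤ)) by ring]; exact hz n
  unfold QF
  rw [Fin.sum_univ_castSucc]
  have hlast : ∑ j : Fin (M + 1),
      A (-1 - ((Fin.last M : ℕ) : ℤ) - ((j : ℕ) : ℤ)) * (c (Fin.last M) * c j) = 0 := by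
    apply Finset.sum_eq_zero; intro j _
    rw [Fin.val_last, hz, zero_mul]
  rw [hlast, add_zero]
  refine Finset.sum_congr rfl fun i _ => ?_
  rw [Fin.sum_univ_castSucc]
  rw [Fin.coe_castSucc, Fin.val_last, hz', zero_mul, add_zero]
  rfl

lemma SV_succ (e : AddChar Fq ℂ) (A : ℤ → Fq) {N M : ℕ}
    (h0 : ∀ m : ℤ, m < -(N : ℤ) → A m = 0) (hM : N ≤ M) :
    SV e A (M + 1) = (Fintype.card Fq : ℂ) * SV e A M := by
  unfold SV
  rw [← (Fin.snocEquiv (fun _ : Fin (M + 1) => Fq)).sum_comp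
    (fun c => e (QF A (M + 1) c))]
  rw [Fintype.sum_prod_type]
  have : ∀ (y : Fq) (d : Fin M → Fq),
      QF A (M + 1) (Fin.snocEquiv (fun _ => Fq) (y, d)) = QF A M d := by
    intro y d
    rw [QF_succ A h0 hM]
    congr 1
    funext i
    show (Fin.snocEquiv (fun _ => Fq) (y, d)) (Fin.castSucc i) = d i
    simp [Fin.snocEquiv]
  simp_rw [this]
  rw [Finset.sum_const, card_univ]
  simp [nsmul_eq_mul]

lemma SV_ge (e : AddChar Fq ℂ) (A : ℤ → Fq) {N : ℕ}
    (h0 : ∀ m : ℤ, m < -(N : ℤ) → A m = 0) (L : ℕ) :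
    SV e A (N + L) = (Fintype.card Fq : ℂ) ^ L * SV e A N := by
  induction L with
  | zero => simp
  | succ L ih =>
      rw [show N + (L + 1) = (N + L) + 1 from rfl, SV_succ e A h0 (Nat.le_add_right N L), ih]
      ring

lemma two_ne_zero' (hq : Odd (Fintype.card Fq)) : (2 : Fq) ≠ 0 := by
  intro h2
  obtain ⟨n, hp, hn⟩ := FiniteField.card Fq (ringChar Fq)
  have hd : ringChar Fq ∣ 2 := (CharP.cast_eq_zero_iff Fq (ringChar Fq) 2).mp (by exact_mod_cast h2)
  have hc2 : ringChar Fq = 2 := (Nat.prime_dvd_prime_iff_eq hp Nat.prime_two).mp hd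
  rw [hn, hc2] at hq
  have : Even (2 ^ (n : ℕ)) := Nat.even_pow.mpr ⟨even_iff_two_dvd.mpr dvd_rfl, n.2.ne'⟩
  exact (Nat.not_odd_iff_even.mpr this) hq

lemma QF_cons_zero (A : ℤ → Fq) (N' : ℕ) (d' : Fin N' → Fq) :
    QF A (N' + 1) (Fin.cons 0 d') = QF (fun m => A (m - 2)) N' d' := by
  unfold QF
  rw [Fin.sum_univ_succ]
  have h1 : ∑ j : Fin (N' + 1),
      A (-1 - (((0 : Fin (N'+1)) : ℕ) : ℤ) - ((j : ℕ) : ℤ)) *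
        ((Fin.cons 0 d' : Fin (N'+1) → Fq) 0 * (Fin.cons 0 d' : Fin (N'+1) → Fq) j) = 0 := by
    apply Finset.sum_eq_zero; intro j _; simp
  rw [h1, zero_add]
  refine Finset.sum_congr rfl fun i _ => ?_
  rw [Fin.sum_univ_succ]
  have h2 : A (-1 - (((i.succ : Fin (N'+1)) : ℕ) : ℤ) - (((0 : Fin (N'+1)) : ℕ) : ℤ)) *
      ((Fin.cons 0 d' : Fin (N'+1) → Fq) i.succ * (Fin.cons 0 d' : Fin (N'+1) → Fq) 0) = 0 := by
    simp
  rw [h2, zero_add]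
  refine Finset.sum_congr rfl fun j _ => ?_
  rw [Fin.cons_succ, Fin.cons_succ]
  congr 2
  simp [Fin.val_succ]
  push_cast
  ring

lemma QF_snoc (A : ℤ → Fq) (N' : ℕ) (h0 : ∀ m : ℤ, m < -((N' : ℤ) + 2) → A m = 0)
    (y : Fq) (d : Fin (N' + 1) → Fq) :
    QF A (N' + 2) (Fin.snoc d y) =
      QF A (N' + 1) d + (2 * A (-((N' : ℤ) + 2))) * (d 0 * y) := by
  unfold QF
  rw [Fin.sum_univ_castSucc]
  have hsnoc : ∀ i : Fin (N' + 1),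
      (Fin.snoc d y : Fin (N'+2) → Fq) (Fin.castSucc i) = d i := fun i => Fin.snoc_castSucc ..
  have hlast : (Fin.snoc d y : Fin (N'+2) → Fq) (Fin.last (N'+1)) = y := Fin.snoc_last ..
  have hrow : ∑ j : Fin (N' + 2),
      A (-1 - (((Fin.last (N'+1)) : ℕ) : ℤ) - ((j : ℕ) : ℤ)) *
        ((Fin.snoc d y : Fin (N'+2) → Fq) (Fin.last (N'+1)) *
         (Fin.snoc d y : Fin (N'+2) → Fq) j) =
      A (-((N' : ℤ) + 2)) * (y * d 0) := by
    rw [Fin.sum_univ_succ]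
    have hz : ∀ j : Fin (N' + 1), A (-1 - (((Fin.last (N'+1)) : ℕ) : ℤ) -
        (((j.succ : Fin (N'+2)) : ℕ) : ℤ)) *
        ((Fin.snoc d y : Fin (N'+2) → Fq) (Fin.last (N'+1)) *
         (Fin.snoc d y : Fin (N'+2) → Fq) j.succ) = 0 := by
      intro j
      rw [h0 _ (by simp [Fin.val_last, Fin.val_succ]; push_cast; omega), zero_mul]
    rw [Finset.sum_eq_zero (fun j _ => hz j), add_zero, hlast]
    have h00 : (Fin.snoc d y : Fin (N'+2) → Fq) (0 : Fin (N'+2)) = d 0 := by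
      rw [show (0 : Fin (N'+2)) = Fin.castSucc (0 : Fin (N'+1)) by rfl, hsnoc]
    rw [h00]
    congr 2
    simp [Fin.val_last]
    push_cast; ring
  rw [hrow]
  have hcols : ∀ i : Fin (N' + 1),
      ∑ j : Fin (N' + 2), A (-1 - (((Fin.castSucc i : Fin (N'+2)) : ℕ) : ℤ) - ((j : ℕ) : ℤ)) *
        ((Fin.snoc d y : Fin (N'+2) → Fq) (Fin.castSucc i) *
         (Fin.snoc d y : Fin (N'+2) → Fq) j) =
      (∑ j : Fin (N' + 1), A (-1 - ((i : ℕ) : ℤ) - ((j : ℕ) : ℤ)) * (d i * d j)) +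
        (if i = 0 then A (-((N' : ℤ) + 2)) * (d 0 * y) else 0) := by
    intro i
    rw [Fin.sum_univ_castSucc]
    congr 1
    · refine Finset.sum_congr rfl fun j _ => ?_
      rw [hsnoc, hsnoc, Fin.coe_castSucc, Fin.coe_castSucc]
    · rw [hsnoc, hlast, Fin.coe_castSucc, Fin.val_last]
      by_cases hi : i = 0
      · subst hi
        simp only [if_true]
        congr 2
        push_cast
        simp
        ring
      · rw [if_neg hi]
        have : ((i : ℕ) : ℤ) ≠ 0 := by
          simpa using fun h => hi (by exact_mod_cast h)
        rw [h0 _ (by push_cast; omega), zero_mul]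
  rw [Finset.sum_congr rfl (fun i _ => hcols i), Finset.sum_add_distrib]
  rw [Finset.sum_ite_eq' Finset.univ (0 : Fin (N'+1))
    (fun _ => A (-((N' : ℤ) + 2)) * (d 0 * y))]
  simp only [Finset.mem_univ, if_true]
  ring

lemma SV_step (e : AddChar Fq ℂ) (he : e ≠ 1) (hq : Odd (Fintype.card Fq)) (N' : ℕ)
    (A : ℤ → Fq) (h0 : ∀ m : ℤ, m < -((N' : ℤ) + 2) → A m = 0)
    (hA : A (-((N' : ℤ) + 2)) ≠ 0) :
    SV e A (N' + 2) = (Fintype.card Fq : ℂ) * SV e (fun m => A (m - 2)) N' := by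
  set a := A (-((N' : ℤ) + 2)) with ha_def
  have h2a : 2 * a ≠ 0 := mul_ne_zero (two_ne_zero' hq) hA
  unfold SV
  rw [← (Fin.snocEquiv (fun _ : Fin (N' + 2) => Fq)).sum_comp
    (fun c => e (QF A (N' + 2) c))]
  rw [Fintype.sum_prod_type]
  have hQ : ∀ (y : Fq) (d : Fin (N' + 1) → Fq),
      QF A (N' + 2) (Fin.snocEquiv (fun _ => Fq) (y, d)) =
        QF A (N' + 1) d + (2 * a) * (d 0 * y) := by
    intro y d
    have : (Fin.snocEquiv (fun _ : Fin (N'+2) => Fq) (y, d)) = Fin.snoc d y := by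
      funext i; rfl
    rw [this, QF_snoc A N' h0 y d]
  simp_rw [hQ, AddChar.map_add_eq_mul]
  rw [Finset.sum_comm]
  have hinner : ∀ d : Fin (N' + 1) → Fq,
      ∑ y : Fq, e (QF A (N' + 1) d) * e ((2 * a) * (d 0 * y)) =
        e (QF A (N' + 1) d) * (if d 0 = 0 then (Fintype.card Fq : ℂ) else 0) := by
    intro d
    rw [← Finset.mul_sum]
    congr 1
    have : ∀ y : Fq, (2 * a) * (d 0 * y) = y * (2 * a * d 0) := fun y => by ring
    simp_rw [this]
    rw [char_sum e he]
    have hiff : (2 * a * d 0 = 0) ↔ d 0 = 0 := by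
      constructor
      · intro h
        rcases mul_eq_zero.mp h with h | h
        · exact absurd h h2a
        · exact h
      · intro h; rw [h, mul_zero]
    simp only [hiff]
  rw [Finset.sum_congr rfl (fun d _ => hinner d)]
  rw [← (Fin.consEquiv (fun _ : Fin (N' + 1) => Fq)).sum_comp
    (fun d => e (QF A (N' + 1) d) * (if d 0 = 0 then (Fintype.card Fq : ℂ) else 0))]
  rw [Fintype.sum_prod_type]
  have hcons : ∀ (x : Fq) (d' : Fin N' → Fq),
      e (QF A (N' + 1) (Fin.consEquiv (fun _ => Fq) (x, d'))) *
        (if (Fin.consEquiv (fun _ : Fin (N'+1) => Fq) (x, d')) 0 = 0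
          then (Fintype.card Fq : ℂ) else 0) =
      if x = 0 then e (QF A (N' + 1) (Fin.cons 0 d')) * (Fintype.card Fq : ℂ) else 0 := by
    intro x d'
    have hc : (Fin.consEquiv (fun _ : Fin (N'+1) => Fq) (x, d')) = Fin.cons x d' := rfl
    rw [hc]
    by_cases hx : x = 0
    · subst hx; simp [Fin.cons_zero]
    · simp [Fin.cons_zero, hx]
  simp_rw [hcons]
  rw [Finset.sum_comm]
  have : ∀ d' : Fin N' → Fq,
      (∑ x : Fq, if x = 0 then e (QF A (N' + 1) (Fin.cons 0 d')) * (Fintype.card Fq : ℂ) else 0)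
      = (Fintype.card Fq : ℂ) * e (QF (fun m => A (m - 2)) N' d') := by
    intro d'
    rw [Finset.sum_ite_eq' Finset.univ (0 : Fq)]
    simp [QF_cons_zero, mul_comm]
  rw [Finset.sum_congr rfl (fun d' _ => this d'), ← Finset.mul_sum]

lemma SV_eval (e : AddChar Fq ℂ) (he : e ≠ 1) (hq : Odd (Fintype.card Fq)) :
    ∀ N : ℕ, ∀ A : ℤ → Fq, (∀ m : ℤ, m < -(N : ℤ) → A m = 0) → A (-(N : ℤ)) ≠ 0 →
    SV e A N = (Fintype.card Fq : ℂ) ^ (N / 2) *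
      (if Even N then 1 else ∑ x : Fq, e (A (-(N : ℤ)) * x ^ 2)) := by
  intro N
  induction N using Nat.strong_induction_on with
  | _ N ih =>
    match N with
    | 0 =>
      intro A h0 hA
      simp [SV, QF]
    | 1 =>
      intro A h0 hA
      have : SV e A 1 = ∑ x : Fq, e (A (-1) * x ^ 2) := by
        unfold SV
        rw [← (Equiv.funUnique (Fin 1) Fq).symm.sum_comp (fun c => e (QF A 1 c))]
        refine Finset.sum_congr rfl fun x _ => ?_
        have h1 : QF A 1 ((Equiv.funUnique (Fin 1) Fq).symm x) = A (-1) * x ^ 2 := by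
          have hx : ((Equiv.funUnique (Fin 1) Fq).symm x) = fun _ => x := rfl
          rw [hx]
          unfold QF
          rw [Fin.sum_univ_one, Fin.sum_univ_one]
          show A (-1 - (((0 : Fin 1) : ℕ) : ℤ) - (((0 : Fin 1) : ℕ) : ℤ)) * (x * x) = A (-1) * x ^ 2
          norm_num [sq]
        rw [h1]
      rw [this]
      norm_num
    | (N' + 2) =>
      intro A h0 hA
      have hc : -(((N' + 2 : ℕ) : ℤ)) = -((N' : ℤ) + 2) := by push_cast; ring
      rw [hc] at hA
      have h0' : ∀ m : ℤ, m < -((N' : ℤ) + 2) → A m = 0 := by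
        intro m hm; exact h0 m (by rw [hc]; exact hm)
      rw [SV_step e he hq N' A h0' hA]
      set B : ℤ → Fq := fun m => A (m - 2) with hB
      have hB0 : ∀ m : ℤ, m < -(N' : ℤ) → B m = 0 := by
        intro m hm; exact h0' _ (by omega)
      have hBA : B (-(N' : ℤ)) ≠ 0 := by
        show A (-(N' : ℤ) - 2) ≠ 0
        rw [show -(N' : ℤ) - 2 = -((N' : ℤ) + 2) by ring]
        exact hA
      rw [ih N' (by omega) B hB0 hBA]
      have hdiv : (N' + 2) / 2 = N' / 2 + 1 := Nat.add_div_right N' (by norm_num)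
      have heven : Even (N' + 2) ↔ Even N' := by
        rw [Nat.even_iff, Nat.even_iff]; omega
      have hBval : B (-(N' : ℤ)) = A (-((N' + 2 : ℕ) : ℤ)) := by
        show A (-(N' : ℤ) - 2) = _
        rw [hc]; congr 1; ring
      rw [hdiv, pow_succ]
      by_cases hev : Even N'
      · rw [if_pos hev, if_pos (heven.mpr hev)]; ring
      · rw [if_neg hev, if_neg (fun h => hev (heven.mp h)), hBval]; ring

lemma gauss_norm (e : AddChar Fq ℂ) (he : e ≠ 1) (hq : Odd (Fintype.card Fq)) {a : Fq}
    (ha : a ≠ 0) :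
    (∑ x : Fq, e (a * x ^ 2)) * (starRingEnd ℂ) (∑ x : Fq, e (a * x ^ 2)) =
      (Fintype.card Fq : ℂ) := by
  have h2a : 2 * a ≠ 0 := mul_ne_zero (two_ne_zero' hq) ha
  rw [map_sum]
  simp_rw [← AddChar.map_neg_eq_conj]
  rw [Finset.sum_mul_sum]
  simp_rw [← AddChar.map_add_eq_mul]
  have hsub : ∀ y : Fq, ∑ x : Fq, e (a * x ^ 2 + -(a * y ^ 2)) =
      ∑ d : Fq, e (a * d ^ 2 + y * (2 * a * d)) := by
    intro y
    rw [← Equiv.sum_comp (Equiv.addLeft y) (fun x => e (a * x ^ 2 + -(a * y ^ 2)))]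
    refine Finset.sum_congr rfl fun d _ => ?_
    have : (Equiv.addLeft y) d = y + d := rfl
    rw [this]
    congr 1
    ring
  rw [Finset.sum_comm]
  rw [Finset.sum_congr rfl (fun y _ => hsub y)]
  rw [Finset.sum_comm]
  have hinner : ∀ d : Fq, ∑ y : Fq, e (a * d ^ 2 + y * (2 * a * d)) =
      e (a * d ^ 2) * (if d = 0 then (Fintype.card Fq : ℂ) else 0) := by
    intro d
    simp_rw [AddChar.map_add_eq_mul, ← Finset.mul_sum]
    rw [char_sum e he]
    have hiff : (2 * a * d = 0) ↔ d = 0 := by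
      constructor
      · intro h
        rcases mul_eq_zero.mp h with h | h
        · exact absurd h h2a
        · exact h
      · intro h; rw [h, mul_zero]
    simp only [hiff]
  rw [Finset.sum_congr rfl (fun d _ => hinner d)]
  have : ∀ d : Fq, e (a * d ^ 2) * (if d = 0 then (Fintype.card Fq : ℂ) else 0) =
      if d = 0 then (Fintype.card Fq : ℂ) else 0 := by
    intro d
    by_cases hd : d = 0
    · subst hd; simp
    · simp [hd]
  rw [Finset.sum_congr rfl (fun d _ => this d)]
  rw [Finset.sum_ite_eq' Finset.univ (0 : Fq)]
  simp

lemma gauss_abs (e : AddChar Fq ℂ) (he : e ≠ 1) (hq : Odd (Fintype.card Fq)) {a : Fq}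
    (ha : a ≠ 0) :
    ‖∑ x : Fq, e (a * x ^ 2)‖ = Real.sqrt (Fintype.card Fq) := by
  have h := gauss_norm e he hq ha
  have hsq : Complex.normSq (∑ x : Fq, e (a * x ^ 2)) = (Fintype.card Fq : ℝ) := by
    have := Complex.mul_conj (∑ x : Fq, e (a * x ^ 2))
    rw [this] at h
    exact_mod_cast h
  rw [Complex.norm_def, hsq]


lemma coeff_finsum {α : Type*} (s : Finset α) (g : α → LaurentSeries Fq) (n : ℤ) :
    (∑ x ∈ s, g x).coeff n = ∑ x ∈ s, (g x).coeff n :=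
  map_sum (HahnSeries.coeff.addMonoidHom n) g s

lemma coeff_one (f : LaurentSeries Fq) (M : ℕ) (c : Fin M → Fq) :
    (f * (∑ j : Fin M,
      (HahnSeries.single ((1 : ℤ) + ((j : ℕ) : ℤ)) (c j) : LaurentSeries Fq)) ^ 2).coeff 1
      = QF f.coeff M c := by
  have h2 : (∑ j : Fin M,
      (HahnSeries.single ((1 : ℤ) + ((j : ℕ) : ℤ)) (c j) : LaurentSeries Fq)) ^ 2
      = ∑ i : Fin M, ∑ j : Fin M,
        (HahnSeries.single (((1 : ℤ) + ((i : ℕ) : ℤ)) + ((1 : ℤ) + ((j : ℕ) : ℤ)))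
          (c i * c j) : LaurentSeries Fq) := by
    rw [sq, Finset.sum_mul_sum]
    exact Finset.sum_congr rfl fun i _ => Finset.sum_congr rfl fun j _ =>
      HahnSeries.single_mul_single
  rw [h2, Finset.mul_sum]
  simp_rw [Finset.mul_sum]
  rw [coeff_finsum]
  refine Finset.sum_congr rfl fun i _ => ?_
  rw [coeff_finsum]
  refine Finset.sum_congr rfl fun j _ => ?_
  show (f * HahnSeries.single (1 + ((i:ℕ):ℤ) + (1 + ((j:ℕ):ℤ))) (c i * c j)).coeff 1
      = f.coeff (-1 - ((i:ℕ):ℤ) - ((j:ℕ):ℤ)) * (c i * c j)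
  have h := HahnSeries.coeff_mul_single_add (x := f) (r := c i * c j)
    (a := (-1 - ((i:ℕ):ℤ) - ((j:ℕ):ℤ))) (b := 1 + ((i:ℕ):ℤ) + (1 + ((j:ℕ):ℤ)))
  rw [show (-1 - ((i:ℕ):ℤ) - ((j:ℕ):ℤ)) + (1 + ((i:ℕ):ℤ) + (1 + ((j:ℕ):ℤ))) = 1 by ring] at h
  exact h


lemma ballSum_eq (e : AddChar Fq ℂ) (f : LaurentSeries Fq) (M : ℕ) :
    FF.ballSum 0 M (fun u => FF.psi e (f * u ^ 2)) =
      ((Fintype.card Fq : ℂ) ^ M)⁻¹ * SV e f.coeff M := by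
  unfold FF.ballSum FF.psi SV
  rw [zpow_zero, one_mul, Finset.mul_sum, Finset.mul_sum]
  refine Finset.sum_congr rfl fun c _ => ?_
  have hs : (∑ j : Fin M, HahnSeries.single ((1 : ℤ) - 0 + ((j : ℕ) : ℤ)) (c j) :
      LaurentSeries Fq) = ∑ j : Fin M, HahnSeries.single ((1 : ℤ) + ((j : ℕ) : ℤ)) (c j) := by
    refine Finset.sum_congr rfl fun j _ => ?_
    norm_num
  simp only [hs, coeff_one]

lemma tendsto_ballSum (e : AddChar Fq ℂ) (f : LaurentSeries Fq) (N : ℕ)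
    (h0 : ∀ m : ℤ, m < -(N : ℤ) → f.coeff m = 0) :
    Filter.Tendsto (fun M : ℕ => FF.ballSum 0 M (fun u => FF.psi e (f * u ^ 2))) Filter.atTop
      (nhds (((Fintype.card Fq : ℂ) ^ N)⁻¹ * SV e f.coeff N)) := by
  have hq0 : (Fintype.card Fq : ℂ) ≠ 0 := by
    exact_mod_cast (Nat.cast_ne_zero (R := ℂ)).mpr Fintype.card_ne_zero
  apply Filter.Tendsto.congr' _ tendsto_const_nhds
  filter_upwards [Filter.eventually_ge_atTop N] with M hM
  obtain ⟨L, rfl⟩ := Nat.exists_eq_add_of_le hM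
  rw [ballSum_eq, SV_ge e f.coeff h0 L, pow_add]
  field_simp

end GIAux

open FF Filter in
/-- Gaussian integrals over `K_∞`.  Let `q` be odd, `f ∈ K_∞`, and let
`∫_𝕋 ψ(f u²) du` denote the Haar integral over `𝕋 = {|u| < 1}` (normalized to `μ(𝕋)=1`,
computed as the limit of its Riemann sums `ballSum 0`).  If `ord(f) = 2k` with `k ≥ 0` the
integral is `|f|^{-1/2}`; if `ord(f) = 2k-1` with `k ≥ 1` it is `|f|^{-1/2} ε_f`; and if
`ord(f) ≤ -1` it is `1`. -/
theorem gaussian_integral {Fq : Type*} [Field Fq] [Fintype Fq]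
    (hq : Odd (Fintype.card Fq)) (e : AddChar Fq ℂ) (he : e ≠ 1)
    (f : LaurentSeries Fq) (hf : f ≠ 0) :
    ((∃ k : ℕ, tdeg f = 2 * (k : ℤ)) →
      Tendsto (fun M : ℕ => ballSum 0 M (fun u => psi e (f * u ^ 2))) atTop
        (nhds (((Real.sqrt (absv f))⁻¹ : ℝ) : ℂ))) ∧
    ((∃ k : ℕ, 1 ≤ k ∧ tdeg f = 2 * (k : ℤ) - 1) →
      Tendsto (fun M : ℕ => ballSum 0 M (fun u => psi e (f * u ^ 2))) atTop
        (nhds ((((Real.sqrt (absv f))⁻¹ : ℝ) : ℂ) * epsFactor e f))) ∧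
    (tdeg f ≤ -1 →
      Tendsto (fun M : ℕ => ballSum 0 M (fun u => psi e (f * u ^ 2))) atTop
        (nhds 1)) := by
  classical
  have hq0 : (Fintype.card Fq : ℂ) ≠ 0 := by
    exact_mod_cast (Nat.cast_ne_zero (R := ℂ)).mpr Fintype.card_ne_zero
  have hq0r : (0 : ℝ) < (Fintype.card Fq : ℝ) := by exact_mod_cast Fintype.card_pos
  refine ⟨?_, ?_, ?_⟩
  · rintro ⟨k, hk⟩
    have hord : f.order = -(2 * (k : ℤ)) := by unfold FF.tdeg at hk; omega
    set N : ℕ := 2 * k with hNdef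
    have hN : ((N : ℕ) : ℤ) = 2 * (k : ℤ) := by push_cast [hNdef]; ring
    have h0 : ∀ m : ℤ, m < -(N : ℤ) → f.coeff m = 0 := by
      intro m hm
      exact HahnSeries.coeff_eq_zero_of_lt_order (by omega)
    have hA : f.coeff (-(N : ℤ)) ≠ 0 := by
      rw [show -(N : ℤ) = f.order by omega]
      exact HahnSeries.coeff_order_eq_zero.not.mpr hf
    have hlim := GIAux.tendsto_ballSum e f N h0
    rw [GIAux.SV_eval e he hq N f.coeff h0 hA] at hlim
    rw [if_pos ⟨k, by omega⟩, mul_one, show N / 2 = k by omega] at hlim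
    have habs : FF.absv f = (Fintype.card Fq : ℝ) ^ (N : ℕ) := by
      unfold FF.absv
      rw [if_neg hf, hord]
      rw [show -(-(2 * (k : ℤ))) = ((N : ℕ) : ℤ) by omega, zpow_natCast]
    have hsqrt : Real.sqrt (FF.absv f) = (Fintype.card Fq : ℝ) ^ k := by
      rw [habs, show (N : ℕ) = k * 2 by omega, pow_mul]
      exact Real.sqrt_sq (by positivity)
    have hval : (((Real.sqrt (FF.absv f))⁻¹ : ℝ) : ℂ) =
        ((Fintype.card Fq : ℂ) ^ N)⁻¹ * (Fintype.card Fq : ℂ) ^ k := by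
      rw [hsqrt]
      push_cast
      rw [show (N : ℕ) = k + k by omega, pow_add]
      field_simp
    rw [hval]
    exact hlim
  · rintro ⟨k, hk1, hk⟩
    have hord : f.order = -(2 * (k : ℤ) - 1) := by unfold FF.tdeg at hk; omega
    set N : ℕ := 2 * k - 1 with hNdef
    have hN : ((N : ℕ) : ℤ) = 2 * (k : ℤ) - 1 := by
      have : (1 : ℕ) ≤ 2 * k := by omega
      push_cast [hNdef]
      omega
    have h0 : ∀ m : ℤ, m < -(N : ℤ) → f.coeff m = 0 := by
      intro m hm
      exact HahnSeries.coeff_eq_zero_of_lt_order (by omega)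
    have hA : f.coeff (-(N : ℤ)) ≠ 0 := by
      rw [show -(N : ℤ) = f.order by omega]
      exact HahnSeries.coeff_order_eq_zero.not.mpr hf
    have hlim := GIAux.tendsto_ballSum e f N h0
    rw [GIAux.SV_eval e he hq N f.coeff h0 hA] at hlim
    have hodd : ¬ Even N := by rw [Nat.even_iff]; omega
    rw [if_neg hodd, show N / 2 = k - 1 by omega] at hlim
    set G : ℂ := ∑ x : Fq, e (f.coeff (-(N : ℤ)) * x ^ 2) with hGdef
    have hGtop : FF.gaussSumTop e f = G := by
      unfold FF.gaussSumTop
      rw [show f.order = -(N : ℤ) by omega]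
    have hGabs : ‖G‖ = Real.sqrt (Fintype.card Fq) := GIAux.gauss_abs e he hq hA
    have habs : FF.absv f = (Fintype.card Fq : ℝ) ^ (N : ℕ) := by
      unfold FF.absv
      rw [if_neg hf, hord]
      rw [show -(-(2 * (k : ℤ) - 1)) = ((N : ℕ) : ℤ) by omega, zpow_natCast]
    have hsq : Real.sqrt ((Fintype.card Fq : ℝ) ^ (N : ℕ)) * Real.sqrt (Fintype.card Fq) =
        (Fintype.card Fq : ℝ) ^ k := by
      rw [← Real.sqrt_mul (by positivity), ← pow_succ]
      rw [show (N : ℕ) + 1 = k * 2 by omega, pow_mul]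
      exact Real.sqrt_sq (by positivity)
    have hspos : (0 : ℝ) < Real.sqrt ((Fintype.card Fq : ℝ) ^ (N : ℕ)) := by positivity
    have hspos2 : (0 : ℝ) < Real.sqrt (Fintype.card Fq : ℝ) := Real.sqrt_pos.mpr hq0r
    have hval : (((Real.sqrt (FF.absv f))⁻¹ : ℝ) : ℂ) * FF.epsFactor e f =
        ((Fintype.card Fq : ℂ) ^ N)⁻¹ * ((Fintype.card Fq : ℂ) ^ (k - 1) * G) := by
      unfold FF.epsFactor
      rw [hGtop, hGabs, habs]
      have hre : ((Real.sqrt ((Fintype.card Fq : ℝ) ^ (N : ℕ)))⁻¹ : ℝ) *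
          ((Real.sqrt (Fintype.card Fq : ℝ))⁻¹ : ℝ) = (((Fintype.card Fq : ℝ) ^ k)⁻¹ : ℝ) := by
        rw [← mul_inv, hsq]
      have hNk : N = (k - 1) + k := by omega
      calc (((Real.sqrt ((Fintype.card Fq : ℝ) ^ (N : ℕ)))⁻¹ : ℝ) : ℂ) *
            (G / ((Real.sqrt (Fintype.card Fq : ℝ) : ℝ) : ℂ))
          = ((((Real.sqrt ((Fintype.card Fq : ℝ) ^ (N : ℕ)))⁻¹ : ℝ) *
              ((Real.sqrt (Fintype.card Fq : ℝ))⁻¹ : ℝ) : ℝ) : ℂ) * G := by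
            push_cast
            rw [div_eq_mul_inv]
            ring
        _ = ((((Fintype.card Fq : ℝ) ^ k)⁻¹ : ℝ) : ℂ) * G := by rw [hre]
        _ = ((Fintype.card Fq : ℂ) ^ N)⁻¹ * ((Fintype.card Fq : ℂ) ^ (k - 1) * G) := by
            push_cast
            rw [hNk, pow_add]
            field_simp
    rw [hval]
    exact hlim
  · intro hneg
    have hord : 1 ≤ f.order := by unfold FF.tdeg at hneg; omega
    have h0 : ∀ m : ℤ, m < -((0 : ℕ) : ℤ) → f.coeff m = 0 := by
      intro m hm
      exact HahnSeries.coeff_eq_zero_of_lt_order (by omega)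
    have hlim := GIAux.tendsto_ballSum e f 0 h0
    have hSV : GIAux.SV e f.coeff 0 = 1 := by simp [GIAux.SV, GIAux.QF]
    rw [hSV, pow_zero, inv_one, one_mul] at hlim
    exact hlim
end
end

section
/- (Multiplicativity of quadratic exponential sums) Let G(x) = x^T B x with B ∈ M_d(F_q[t]) symmetric of nonzero determinant D, and for r coprime to D define S_r(G,c,c',e) = Σ*_{|a|<|r|} Σ_{b mod r} ψ((a(G(b) + ⟨c',b⟩ + e) − ⟨c,b⟩)/r). If r = uv with u, v coprime, then S_r(G,c,c',e) = S_u(G, v̄c, c', e) · S_v(G, ūc, c', e), where v̄ and ū denote inverses of v modulo u and u modulo v respectively. -/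
/-!
Common setup: `K_∞ = 𝔽_q((1/t))` is modeled as `LaurentSeries Fq` in the variable `X = 1/t`,
so that an element `Σ_{i ≤ N} a_i t^i` of `K_∞` corresponds to the Hahn series
`Σ_{n ≥ -N} a_{-n} X^n`.  The degree in `t` is the negative of the Hahn-series order,
the absolute value is `|α| = q^{deg_t α}`, and the standard additive character is
`ψ(α) = e_q(coefficient of t^{-1}) = e_q(coefficient of X^1)`.
-/

open scoped BigOperators Classical
noncomputable section



namespace FF
variable {Fq : Type*} [Field Fq] [Fintype Fq]

/-- The complete quadratic exponential sum
`S_r(G,c,c',e₀) = Σ*_{|a|<|r|} Σ_{b mod r} ψ((a(G(b) + ⟨c',b⟩ + e₀) − ⟨c,b⟩)/r)`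
attached to the quadratic form `G(x) = xᵀBx`; residues `a` and the coordinates of `b`
modulo `r` are enumerated by coefficient tuples of length `deg r`, and `Σ*` restricts to
`a` coprime to `r`. -/
def quadSum {d : ℕ} (e : AddChar Fq ℂ) (B : Matrix (Fin d) (Fin d) (Polynomial Fq))
    (r : Polynomial Fq) (c c' : Fin d → Polynomial Fq) (e₀ : Polynomial Fq) : ℂ :=
  ∑ a : Fin r.natDegree → Fq, ∑ b : Fin d → Fin r.natDegree → Fq,
    if IsCoprime (polyOf a) r then
      psi e (toK (polyOf a * ((∑ i, ∑ j, polyOf (b i) * B i j * polyOf (b j)) +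
          (∑ i, c' i * polyOf (b i)) + e₀) - ∑ i, c i * polyOf (b i)) / toK r)
    else 0

end FF

namespace FF
variable {Fq : Type*} [Field Fq]
set_option linter.unusedSectionVars false

lemma tK_pow (n : ℕ) : (tK : LaurentSeries Fq) ^ n = HahnSeries.single (-(n : ℤ)) 1 := by
  induction n with
  | zero => simp [tK]
  | succ n ih =>
    rw [pow_succ, ih, tK, HahnSeries.single_mul_single, mul_one]
    congr 1
    push_cast; ring

lemma toK_monomial_coeff (a : Fq) (n : ℕ) (m : ℤ) :
    (HahnSeries.C a * (tK : LaurentSeries Fq) ^ n).coeff m =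
      if m = -(n : ℤ) then a else 0 := by
  rw [tK_pow, HahnSeries.C_apply, HahnSeries.single_mul_single, HahnSeries.coeff_single]
  simp

lemma toK_coeff (p : Polynomial Fq) (m : ℤ) :
    (toK p).coeff m = if m ≤ 0 then p.coeff (-m).toNat else 0 := by
  rw [toK, Polynomial.eval₂_eq_sum, Polynomial.sum]
  have hs : (∑ n ∈ p.support, HahnSeries.C (p.coeff n) * tK ^ n).coeff m
      = ∑ n ∈ p.support, (HahnSeries.C (p.coeff n) * tK ^ n).coeff m :=
    map_sum (HahnSeries.coeff.addMonoidHom m) _ _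
  rw [hs]
  simp only [toK_monomial_coeff]
  by_cases hm : m ≤ 0
  · rw [if_pos hm, Finset.sum_eq_single ((-m).toNat)]
    · rw [if_pos (by omega)]
    · intro n _ hne
      rw [if_neg (by omega)]
    · intro h
      rw [Polynomial.notMem_support_iff.mp h, if_pos (by omega)]
  · rw [if_neg hm]
    exact Finset.sum_eq_zero fun n _ => by rw [if_neg (by omega)]

lemma toK_coeff_pos (p : Polynomial Fq) {m : ℤ} (hm : 0 < m) : (toK p).coeff m = 0 := by
  rw [toK_coeff, if_neg (by omega)]

lemma toK_injective : Function.Injective (toK : Polynomial Fq → LaurentSeries Fq) := by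
  intro p q h
  ext n
  have := congrArg (fun α => HahnSeries.coeff α (-(n : ℤ))) h
  simpa [toK_coeff] using this

lemma toK_map_add (p q : Polynomial Fq) : toK (p + q) = toK p + toK q :=
  Polynomial.eval₂_add _ _
lemma toK_map_mul (p q : Polynomial Fq) : toK (p * q) = toK p * toK q :=
  Polynomial.eval₂_mul _ _
lemma toK_map_sub (p q : Polynomial Fq) : toK (p - q) = toK p - toK q :=
  map_sub (Polynomial.eval₂RingHom (HahnSeries.C : Fq →+* LaurentSeries Fq) tK) p q
lemma toK_map_one : toK (1 : Polynomial Fq) = 1 := Polynomial.eval₂_one _ _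

lemma toK_map_zero : toK (0 : Polynomial Fq) = 0 := Polynomial.eval₂_zero _ _

lemma toK_ne_zero {p : Polynomial Fq} (hp : p ≠ 0) : toK p ≠ 0 := by
  intro h
  exact hp (toK_injective (by rw [h, toK_map_zero]))

lemma psi_add (e : AddChar Fq ℂ) (α β : LaurentSeries Fq) :
    psi e (α + β) = psi e α * psi e β := by
  rw [psi, psi, psi, HahnSeries.coeff_add, AddChar.map_add_eq_mul]

lemma psi_toK (e : AddChar Fq ℂ) (p : Polynomial Fq) : psi e (toK p) = 1 := by
  rw [psi, toK_coeff_pos p one_pos, AddChar.map_zero_eq_one]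

end FF

namespace FF
variable {Fq : Type*} [Field Fq]
set_option linter.unusedSectionVars false

lemma polyOf_coeff {N : ℕ} (c : Fin N → Fq) (j : Fin N) :
    (polyOf c).coeff (j : ℕ) = c j := by
  rw [polyOf, Polynomial.finset_sum_coeff]
  rw [Finset.sum_eq_single j]
  · simp
  · intro i _ hne
    simp only [Polynomial.coeff_C_mul, Polynomial.coeff_X_pow]
    rw [if_neg (fun h => hne (Fin.ext h.symm)), mul_zero]
  · simp

lemma polyOf_degree {N : ℕ} (c : Fin N → Fq) : (polyOf c).degree < (N : WithBot ℕ) := by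
  apply lt_of_le_of_lt (Polynomial.degree_sum_le _ _)
  rw [Finset.sup_lt_iff (by exact_mod_cast WithBot.bot_lt_coe N)]
  intro i _
  apply lt_of_le_of_lt (Polynomial.degree_C_mul_X_pow_le _ _)
  exact_mod_cast i.isLt

lemma polyOf_mk {N : ℕ} (p : Polynomial Fq) (h : p.degree < (N : WithBot ℕ)) :
    polyOf (fun j : Fin N => p.coeff (j : ℕ)) = p := by
  rcases eq_or_ne p 0 with rfl | hp
  · simp [polyOf]
  · have hd : p.natDegree < N := by
      rwa [Polynomial.degree_eq_natDegree hp, Nat.cast_lt] at h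
    conv_rhs => rw [p.as_sum_range' N hd]
    rw [polyOf, Fin.sum_univ_eq_sum_range (fun i => Polynomial.C (p.coeff i) * Polynomial.X ^ i)]
    exact Finset.sum_congr rfl fun i _ => by rw [Polynomial.C_mul_X_pow_eq_monomial]

lemma polyOf_injective {N : ℕ} : Function.Injective (polyOf : (Fin N → Fq) → Polynomial Fq) := by
  intro a b h
  funext j
  rw [← polyOf_coeff a j, ← polyOf_coeff b j, h]

/-- The coefficient tuple of `p % r`. -/
def tup (r p : Polynomial Fq) : Fin r.natDegree → Fq := fun j => (p % r).coeff (j : ℕ)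

lemma polyOf_tup {r : Polynomial Fq} (hr : r ≠ 0) (p : Polynomial Fq) :
    polyOf (tup r p) = p % r := by
  apply polyOf_mk
  calc (p % r).degree < r.degree := EuclideanDomain.mod_lt _ hr
  _ = (r.natDegree : WithBot ℕ) := Polynomial.degree_eq_natDegree hr

lemma dvd_sub_tup {r : Polynomial Fq} (hr : r ≠ 0) (p : Polynomial Fq) :
    r ∣ p - polyOf (tup r p) := by
  rw [polyOf_tup hr]
  exact ⟨p / r, by linear_combination - EuclideanDomain.div_add_mod p r⟩

lemma modInv_spec {x c : Polynomial Fq} (h : IsCoprime x c) :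
    ∃ k, modInv x c * x + k * c = 1 := by
  rw [modInv, dif_pos h]
  exact h.choose_spec

lemma isCoprime_modInv {x c : Polynomial Fq} (h : IsCoprime x c) :
    IsCoprime (modInv x c) c := by
  obtain ⟨k, hk⟩ := modInv_spec h
  exact ⟨x, k, by linear_combination hk⟩

lemma isCoprime_mod_iff {p r : Polynomial Fq} :
    IsCoprime (p % r) r ↔ IsCoprime p r := by
  constructor
  · intro h
    have h2 := h.add_mul_left_left (p / r)
    have h3 : p % r + r * (p / r) = p := by linear_combination EuclideanDomain.div_add_mod p r
    rwa [h3] at h2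
  · intro h
    have h2 : p % r = p + r * (-(p / r)) := by
      linear_combination EuclideanDomain.div_add_mod p r
    rw [h2]
    exact h.add_mul_left_left _

lemma psi_div_congr (e : AddChar Fq ℂ) {r x y : Polynomial Fq} (hr : r ≠ 0)
    (h : r ∣ x - y) : psi e (toK x / toK r) = psi e (toK y / toK r) := by
  obtain ⟨k, hk⟩ := h
  have hx : x = y + r * k := by linear_combination hk
  have hr' : toK r ≠ 0 := toK_ne_zero hr
  have : toK x / toK r = toK y / toK r + toK k := by
    rw [hx, toK_map_add, toK_map_mul]
    field_simp
  rw [this, psi_add, psi_toK, mul_one]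
end FF

namespace FF
variable {Fq : Type*} [Field Fq]
set_option linter.unusedSectionVars false

lemma psi_split (e : AddChar Fq ℂ) {u v vb ub w : Polynomial Fq} (hu : u ≠ 0) (hv : v ≠ 0)
    (hw : 1 - v * vb - u * ub = u * v * w) (x : Polynomial Fq) :
    psi e (toK x / toK (u * v)) =
      psi e (toK (vb * x) / toK u) * psi e (toK (ub * x) / toK v) := by
  have hu' : toK u ≠ 0 := toK_ne_zero hu
  have hv' : toK v ≠ 0 := toK_ne_zero hv
  have hw' : 1 - toK v * toK vb - toK u * toK ub = toK u * toK v * toK w := by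
    simpa only [toK_map_sub, toK_map_mul, toK_map_one] using congrArg toK hw
  have key : toK x / toK (u * v) =
      toK (vb * x) / toK u + (toK (ub * x) / toK v + toK (x * w)) := by
    simp only [toK_map_mul]
    field_simp
    linear_combination (toK x) * hw'
  rw [key, psi_add, psi_add, psi_toK, mul_one]

/-- The polynomial whose `ψ`-value is summed in `quadSum`. -/
def expr {d : ℕ} (B : Matrix (Fin d) (Fin d) (Polynomial Fq)) (c c' : Fin d → Polynomial Fq)
    (e₀ A : Polynomial Fq) (β : Fin d → Polynomial Fq) : Polynomial Fq :=
  A * ((∑ i, ∑ j, β i * B i j * β j) + (∑ i, c' i * β i) + e₀) - ∑ i, c i * β i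

lemma expr_congr {d : ℕ} (B : Matrix (Fin d) (Fin d) (Polynomial Fq))
    (c c' : Fin d → Polynomial Fq) (e₀ : Polynomial Fq) {r w A A' : Polynomial Fq}
    {β β' : Fin d → Polynomial Fq} (hA : r ∣ A' - w * A) (hβ : ∀ i, r ∣ β' i - β i) :
    r ∣ expr B (fun i => w * c i) c' e₀ A' β' - w * expr B c c' e₀ A β := by
  classical
  set I : Ideal (Polynomial Fq) := Ideal.span {r} with hI
  set f : Polynomial Fq →+* Polynomial Fq ⧸ I := Ideal.Quotient.mk I with hf
  have hdvd : ∀ {x y : Polynomial Fq}, r ∣ x - y → f x = f y := by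
    intro x y h
    rw [hf, Ideal.Quotient.mk_eq_mk_iff_sub_mem]
    exact Ideal.mem_span_singleton.mpr h
  have h1 : f (expr B (fun i => w * c i) c' e₀ A' β') = f (w * expr B c c' e₀ A β) := by
    have hfA : f A' = f w * f A := by rw [hdvd hA, map_mul]
    have hfβ : ∀ i, f (β' i) = f (β i) := fun i => hdvd (hβ i)
    have hs : (∑ x : Fin d, f w * f (c x) * f (β x)) = f w * ∑ x : Fin d, f (c x) * f (β x) := by
      rw [Finset.mul_sum]
      exact Finset.sum_congr rfl fun i _ => by ring
    simp only [expr, map_sub, map_mul, map_add, map_sum, hfA, hfβ]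
    rw [hs]
    ring
  have h2 := (Ideal.Quotient.mk_eq_mk_iff_sub_mem _ _).mp h1
  exact Ideal.mem_span_singleton.mp h2

end FF

namespace FF
variable {Fq : Type*} [Field Fq] [Fintype Fq]
set_option linter.unusedSectionVars false

lemma dvd_of_mod_eq {r x y : Polynomial Fq} (h : x % r = y % r) : r ∣ x - y :=
  ⟨x / r - y / r, by
    linear_combination - (EuclideanDomain.div_add_mod x r) + (EuclideanDomain.div_add_mod y r) + h⟩

lemma quadSum_eq_sum_prod {d : ℕ} (e : AddChar Fq ℂ) (B : Matrix (Fin d) (Fin d) (Polynomial Fq))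
    (r : Polynomial Fq) (c c' : Fin d → Polynomial Fq) (e₀ : Polynomial Fq) :
    quadSum e B r c c' e₀ =
      ∑ p : (Fin r.natDegree → Fq) × (Fin d → Fin r.natDegree → Fq),
        (if IsCoprime (polyOf p.1) r then
          psi e (toK (expr B c c' e₀ (polyOf p.1) (fun i => polyOf (p.2 i))) / toK r) else 0) := by
  rw [Fintype.sum_prod_type]
  rfl

end FF


open FF in
open FF in
/-- multiplicativity of quadratic exponential sums.  Let `G(x) = xᵀBx`
with `B` symmetric over `𝔽_q[t]` of nonzero determinant `D`, and let `r = uv` be coprime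
to `D` with `u, v` coprime.  Then `S_r(G,c,c',e₀) = S_u(G, v̄c, c', e₀) S_v(G, ūc, c', e₀)`,
where `v̄` (resp. `ū`) is the inverse of `v` mod `u` (resp. of `u` mod `v`). -/
theorem quadSum_multiplicative {Fq : Type*} [Field Fq] [Fintype Fq]
    (hq : Odd (Fintype.card Fq)) (e : AddChar Fq ℂ) (he : e ≠ 1) {d : ℕ}
    (B : Matrix (Fin d) (Fin d) (Polynomial Fq)) (hB : B.IsSymm) (hD : B.det ≠ 0)
    (u v : Polynomial Fq) (hu : u ≠ 0) (hv : v ≠ 0)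
    (huv : IsCoprime u v) (hrD : IsCoprime (u * v) B.det)
    (c c' : Fin d → Polynomial Fq) (e₀ : Polynomial Fq) :
    quadSum e B (u * v) c c' e₀ =
      quadSum e B u (fun i => modInv v u * c i) c' e₀ *
        quadSum e B v (fun i => modInv u v * c i) c' e₀ := by
  classical
  set vb := modInv v u with hvb_def
  set ub := modInv u v with hub_def
  obtain ⟨k₁, hk₁⟩ := modInv_spec huv.symm
  obtain ⟨k₂, hk₂⟩ := modInv_spec huv
  rw [← hvb_def] at hk₁
  rw [← hub_def] at hk₂
  have huv0 : u * v ≠ 0 := mul_ne_zero hu hv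
  have du : u ∣ 1 - v * vb - u * ub := ⟨k₁ - ub, by linear_combination -hk₁⟩
  have dv : v ∣ 1 - v * vb - u * ub := ⟨k₂ - vb, by linear_combination -hk₂⟩
  obtain ⟨w, hw⟩ := huv.mul_dvd du dv
  have hcop_vb : IsCoprime vb u := isCoprime_modInv huv.symm
  have hcop_ub : IsCoprime ub v := isCoprime_modInv huv
  have cancel_u : ∀ {s : Polynomial Fq}, u ∣ vb * s → u ∣ s := by
    intro s hs
    obtain ⟨z, hz⟩ := hs
    exact ⟨v * z + k₁ * s, by linear_combination -(s * hk₁) + v * hz⟩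
  have cancel_v : ∀ {s : Polynomial Fq}, v ∣ ub * s → v ∣ s := by
    intro s hs
    obtain ⟨z, hz⟩ := hs
    exact ⟨u * z + k₂ * s, by linear_combination -(s * hk₂) + u * hz⟩
  rw [quadSum_eq_sum_prod, quadSum_eq_sum_prod, quadSum_eq_sum_prod, Fintype.sum_mul_sum,
    ← Fintype.sum_prod_type']
  set Φ : ((Fin (u*v).natDegree → Fq) × (Fin d → Fin (u*v).natDegree → Fq)) →
      (((Fin u.natDegree → Fq) × (Fin d → Fin u.natDegree → Fq)) ×
        ((Fin v.natDegree → Fq) × (Fin d → Fin v.natDegree → Fq))) :=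
    fun p => ((tup u (vb * polyOf p.1), fun i => tup u (polyOf (p.2 i))),
              (tup v (ub * polyOf p.1), fun i => tup v (polyOf (p.2 i)))) with hΦ
  have degsmall : ∀ (a a' : Fin (u*v).natDegree → Fq),
      (polyOf a - polyOf a').degree < (u * v).degree := by
    intro a a'
    refine lt_of_le_of_lt (Polynomial.degree_sub_le _ _) ?_
    rw [Polynomial.degree_eq_natDegree huv0]
    exact max_lt (polyOf_degree a) (polyOf_degree a')
  have hinj : Function.Injective Φ := by
    intro p p' hpp
    simp only [hΦ, Prod.mk.injEq] at hpp
    obtain ⟨⟨h1, h2⟩, h3, h4⟩ := hpp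
    have key : ∀ {x y : Polynomial Fq}, tup u x = tup u y → u ∣ x - y := by
      intro x y h
      exact dvd_of_mod_eq (by rw [← polyOf_tup hu, ← polyOf_tup hu, h])
    have keyv : ∀ {x y : Polynomial Fq}, tup v x = tup v y → v ∣ x - y := by
      intro x y h
      exact dvd_of_mod_eq (by rw [← polyOf_tup hv, ← polyOf_tup hv, h])
    have hu1 : u ∣ polyOf p.1 - polyOf p'.1 := cancel_u (by
      have := key h1; rwa [← mul_sub] at this)
    have hv1 : v ∣ polyOf p.1 - polyOf p'.1 := cancel_v (by
      have := keyv h3; rwa [← mul_sub] at this)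
    have hA : polyOf p.1 = polyOf p'.1 := by
      have := Polynomial.eq_zero_of_dvd_of_degree_lt (huv.mul_dvd hu1 hv1) (degsmall _ _)
      exact sub_eq_zero.mp this
    have hBc : ∀ i, polyOf (p.2 i) = polyOf (p'.2 i) := by
      intro i
      have hu2 : u ∣ polyOf (p.2 i) - polyOf (p'.2 i) := key (congrFun h2 i)
      have hv2 : v ∣ polyOf (p.2 i) - polyOf (p'.2 i) := keyv (congrFun h4 i)
      exact sub_eq_zero.mp
        (Polynomial.eq_zero_of_dvd_of_degree_lt (huv.mul_dvd hu2 hv2) (degsmall _ _))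
    exact Prod.ext_iff.mpr ⟨polyOf_injective hA, funext fun i => polyOf_injective (hBc i)⟩
  have hcard : Fintype.card ((Fin (u*v).natDegree → Fq) × (Fin d → Fin (u*v).natDegree → Fq)) =
      Fintype.card (((Fin u.natDegree → Fq) × (Fin d → Fin u.natDegree → Fq)) ×
        ((Fin v.natDegree → Fq) × (Fin d → Fin v.natDegree → Fq))) := by
    simp only [Fintype.card_prod, Fintype.card_fun, Fintype.card_fin,
      Polynomial.natDegree_mul hu hv, pow_add, mul_pow]
    ring
  refine Fintype.sum_bijective Φ ((Fintype.bijective_iff_injective_and_card Φ).mpr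
    ⟨hinj, hcard⟩) _ _ ?_
  intro p
  simp only [hΦ]
  set A := polyOf p.1 with hA_def
  have hcop_iff : IsCoprime A (u * v) ↔
      (IsCoprime (polyOf (tup u (vb * A))) u ∧ IsCoprime (polyOf (tup v (ub * A))) v) := by
    rw [polyOf_tup hu, polyOf_tup hv, isCoprime_mod_iff, isCoprime_mod_iff,
      IsCoprime.mul_left_iff, IsCoprime.mul_left_iff, IsCoprime.mul_right_iff]
    constructor
    · rintro ⟨g1, g2⟩; exact ⟨⟨hcop_vb, g1⟩, ⟨hcop_ub, g2⟩⟩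
    · rintro ⟨⟨-, g1⟩, -, g2⟩; exact ⟨g1, g2⟩
  by_cases hc : IsCoprime A (u * v)
  · rw [if_pos hc, if_pos (hcop_iff.mp hc).1, if_pos (hcop_iff.mp hc).2]
    rw [psi_split e hu hv hw]
    congr 1
    · refine (psi_div_congr e hu (expr_congr B c c' e₀ ?_ ?_)).symm
      · exact dvd_sub_comm.mp (dvd_sub_tup hu _)
      · exact fun i => dvd_sub_comm.mp (dvd_sub_tup hu _)
    · refine (psi_div_congr e hv (expr_congr B c c' e₀ ?_ ?_)).symm
      · exact dvd_sub_comm.mp (dvd_sub_tup hv _)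
      · exact fun i => dvd_sub_comm.mp (dvd_sub_tup hv _)
  · rw [if_neg hc]
    have h' : ¬(IsCoprime (polyOf (tup u (vb * A))) u ∧
        IsCoprime (polyOf (tup v (ub * A))) v) := fun hcc => hc (hcop_iff.mpr hcc)
    rcases not_and_or.mp h' with h1 | h2
    · rw [if_neg h1, zero_mul]
    · rw [if_neg h2, mul_zero]
end
end
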